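/- arXiv:2103.06916 — 4 statements merged into one kernel-verified Lean document; each statement's English description precedes it below -/
import Mathlib

section
/- Let G be a graph containing a simple cycle C with t vertices, satisfying the Pair Condition (d_G(c_i,c_j) = d_C(c_i,c_j) for all i,j). Suppose v is a vertex of G and i, j, k are distinct indices with d_C(c_i,c_j) + d_C(c_j,c_k) + d_C(c_i,c_k) = t and d_G(c_i,v) + d_G(c_j,v) + d_G(c_k,v) ≤ t/2. Then d_C(c_i,c_j) = d_G(c_i,v) + d_G(c_j,v), d_C(c_j,c_k) = d_G(c_j,v) + d_G(c_k,v), and d_C(c_i,c_k) = d_G(c_i,v) + d_G(c_k,v). -/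
/-- Cyclic distance (number of edges along the cycle) between indices `a b` on a `t`-cycle. -/
def cycDist (t a b : ℕ) : ℕ := min ((b + t - a) % t) ((a + t - b) % t)

/-- If `(G,C)` satisfies the Pair Condition, `v` is a vertex, and `i, j, k` are distinct
cycle indices with `d_C(c_i,c_j) + d_C(c_j,c_k) + d_C(c_i,c_k) = t` and
`d_G(c_i,v) + d_G(c_j,v) + d_G(c_k,v) ≤ t/2`, then the shortest paths through `v`
realize the cycle distances between `c_i`, `c_j`, `c_k`. -/
theorem stmt1 {V : Type*} (G : SimpleGraph V) (hG : G.Connected) (t : ℕ) (ht : 3 ≤ t)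
    (c : ℕ → V)
    (hper : ∀ ℓ, c (ℓ + t) = c ℓ)
    (hadj : ∀ ℓ, G.Adj (c ℓ) (c (ℓ + 1)))
    (hinj : ∀ a b, a < t → b < t → c a = c b → a = b)
    (hpair : ∀ a b, a < t → b < t → G.dist (c a) (c b) = cycDist t a b)
    (v : V) (i j k : ℕ) (hi : i < t) (hj : j < t) (hk : k < t)
    (hij : i ≠ j) (hjk : j ≠ k) (hik : i ≠ k)
    (hsum : cycDist t i j + cycDist t j k + cycDist t i k = t)
    (hle : (G.dist (c i) v + G.dist (c j) v + G.dist (c k) v : ℚ) ≤ (t : ℚ) / 2) :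
    cycDist t i j = G.dist (c i) v + G.dist (c j) v ∧
    cycDist t j k = G.dist (c j) v + G.dist (c k) v ∧
    cycDist t i k = G.dist (c i) v + G.dist (c k) v := by
  have h2 : 2 * (G.dist (c i) v + G.dist (c j) v + G.dist (c k) v) ≤ t := by
    have : ((2 * (G.dist (c i) v + G.dist (c j) v + G.dist (c k) v) : ℕ) : ℚ) ≤ (t : ℚ) := by
      push_cast
      linarith
    exact_mod_cast this
  have hij' : cycDist t i j ≤ G.dist (c i) v + G.dist (c j) v := by
    rw [← hpair i j hi hj]
    calc G.dist (c i) (c j) ≤ G.dist (c i) v + G.dist v (c j) := hG.dist_triangle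
    _ = G.dist (c i) v + G.dist (c j) v := by rw [SimpleGraph.dist_comm (u := v)]
  have hjk' : cycDist t j k ≤ G.dist (c j) v + G.dist (c k) v := by
    rw [← hpair j k hj hk]
    calc G.dist (c j) (c k) ≤ G.dist (c j) v + G.dist v (c k) := hG.dist_triangle
    _ = G.dist (c j) v + G.dist (c k) v := by rw [SimpleGraph.dist_comm (u := v)]
  have hik' : cycDist t i k ≤ G.dist (c i) v + G.dist (c k) v := by
    rw [← hpair i k hi hk]
    calc G.dist (c i) (c k) ≤ G.dist (c i) v + G.dist v (c k) := hG.dist_triangle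
    _ = G.dist (c i) v + G.dist (c k) v := by rw [SimpleGraph.dist_comm (u := v)]
  omega
end

section
/- In a sketchable pocket Q = Q_{(p_i,p_j)} (with i < j < i+t), if the well-behaved sketch Λ⁺_Q does not assign vertex v to a simplex containing p_j, then either v = c_{j-1}, or there exists a triangle of the triangulation inside Q with vertices p_a, p_b, p_j where i ≤ a < b < j, such that for the pocket Q' = Q_{(p_a,p_b)} we have Λ⁺_{Q'}(v) ≠ T_{Q'}^+. -/
open scoped Classical

/-- A (recursively triangulated) pocket with lid `(p_i, p_j)`:
either a trivial pocket consisting of the single polygon edge `(p_i, p_{i+1})`,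
or a lid triangle `{p_i, p_m, p_j}` together with two child pockets. -/
inductive Pocket : ℕ → ℕ → Type where
  | triv (i : ℕ) : Pocket i (i + 1)
  | node {i m j : ℕ} (him : i < m) (hmj : m < j)
      (L : Pocket i m) (R : Pocket m j) : Pocket i j

namespace Pocket

/-- The triangles of the pocket's triangulation, encoded as the finsets of
polygon-vertex indices spanning them. -/
def tris : ∀ {i j : ℕ}, Pocket i j → Set (Finset ℕ)
  | _, _, triv _ => ∅
  | _, _, node (i := i) (m := m) (j := j) _ _ L R =>
      insert {i, m, j} (tris L ∪ tris R)

variable {V : Type*} (G : SimpleGraph V) (c : ℕ → V)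

/-- Push an interior sketch value across the lid `(p_i, p_j)`:
`none` encodes the outer triangle `T_Q^+`. -/
noncomputable def push (i j : ℕ) (f : V → Finset ℕ) (v : V) : Option (Finset ℕ) :=
  if ({i, j} : Finset ℕ) ⊆ f v ∧ ∀ u, G.Adj u v → (f u ∩ {i, j}).Nonempty then none
  else if (f v ∩ ({i, j} : Finset ℕ)).Nonempty then some (f v ∩ {i, j})
  else some (f v)

/-- The canonical interior sketch `Λ_Q`, with `∅` encoding "undefined". -/
noncomputable def lam : ∀ {i j : ℕ}, Pocket i j → V → Finset ℕ
  | _, _, triv i, v =>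
      if v = c i then {i} else if v = c (i + 1) then {i + 1} else {i, i + 1}
  | _, _, node (i := i) (m := m) (j := j) _ _ L R, v =>
      let a := (push G i m (fun u => lam L u) v).getD {i, m, j}
      let b := (push G m j (fun u => lam R u) v).getD {i, m, j}
      if (a ∩ b).Nonempty then a ∩ b
      else if b = ({i, m, j} : Finset ℕ) then a
      else if a = ({i, m, j} : Finset ℕ) then b
      else ∅

/-- The canonical well-behaved local sketch `Λ⁺_Q`; `none` encodes `T_Q^+`. -/
noncomputable def lamPlus {i j : ℕ} (Q : Pocket i j) : V → Option (Finset ℕ) :=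
  push G i j (lam G c Q)

/-- Compatibility of two local-sketch values: they must be simplices of a common
triangle (where `none` stands for the outer triangle `T_Q^+`, whose simplices inside
the pocket lie on the lid `{i, j}`). -/
def Compat {i j : ℕ} (Q : Pocket i j) :
    Option (Finset ℕ) → Option (Finset ℕ) → Prop
  | none, none => True
  | none, some s => s ⊆ ({i, j} : Finset ℕ)
  | some s, none => s ⊆ ({i, j} : Finset ℕ)
  | some s, some s' =>
      (s ⊆ ({i, j} : Finset ℕ) ∧ s' ⊆ ({i, j} : Finset ℕ)) ∨
      ∃ T ∈ tris Q, s ⊆ T ∧ s' ⊆ T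

/-- A local sketch for the pocket `Q`. -/
def IsLocalSketch {i j : ℕ} (Q : Pocket i j) (Γ : V → Option (Finset ℕ)) : Prop :=
  (∀ ℓ, i ≤ ℓ → ℓ ≤ j → Γ (c ℓ) = some {ℓ}) ∧
  (∀ v s, Γ v = some s → s.Nonempty ∧
    (s ⊆ ({i, j} : Finset ℕ) ∨ ∃ T ∈ tris Q, s ⊆ T)) ∧
  (∀ u v, G.Adj u v → Compat Q (Γ u) (Γ v))

/-- The pocket `Q` is sketchable. -/
def HasSketch {i j : ℕ} (Q : Pocket i j) : Prop :=
  ∃ Γ, IsLocalSketch G c Q Γ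

/-- `Sub P Q`: `P` is a subpocket of `Q`. -/
inductive Sub : ∀ {a b i j : ℕ}, Pocket a b → Pocket i j → Prop where
  | refl {i j : ℕ} (Q : Pocket i j) : Sub Q Q
  | left {a b i m j : ℕ} {P : Pocket a b} (him : i < m) (hmj : m < j)
      {L : Pocket i m} {R : Pocket m j} : Sub P L → Sub P (node him hmj L R)
  | right {a b i m j : ℕ} {P : Pocket a b} (him : i < m) (hmj : m < j)
      {L : Pocket i m} {R : Pocket m j} : Sub P R → Sub P (node him hmj L R)

end Pocket

open Pocket in
private lemma stmt5_aux {V : Type*} (G : SimpleGraph V) (c : ℕ → V) :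
    ∀ {i j : ℕ} (Q : Pocket i j) (v : V) (s : Finset ℕ),
      lamPlus G c Q v = some s → j ∉ s →
      v = c (j - 1) ∨
        ∃ (a b : ℕ) (hab : a < b) (hbj : b < j) (QL : Pocket a b) (QR : Pocket b j),
          i ≤ a ∧ Sub (Pocket.node hab hbj QL QR) Q ∧ lamPlus G c QL v ≠ none := by
  intro i j Q
  induction Q with
  | triv i =>
    intro v s hs hjs
    have hall : ∀ u, G.Adj u v →
        ((lam G c (Pocket.triv i) u) ∩ ({i, i + 1} : Finset ℕ)).Nonempty := by
      intro u _
      unfold lam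
      split_ifs <;> simp
    unfold lamPlus push at hs
    by_cases hvi : v = c i
    · have hfv : lam G c (Pocket.triv i) v = {i} := by unfold lam; rw [if_pos hvi]
      rw [hfv] at hs
      split_ifs at hs with h1 h2
      · left
        simpa using hvi
      · exact absurd ⟨i, by simp⟩ h2
    · by_cases hvi1 : v = c (i + 1)
      · have hfv : lam G c (Pocket.triv i) v = {i + 1} := by
          unfold lam; rw [if_neg hvi, if_pos hvi1]
        rw [hfv] at hs
        split_ifs at hs with h1 h2
        · exfalso
          apply hjs
          injection hs with h
          rw [← h]
          simp
        · exact absurd ⟨i + 1, by simp⟩ h2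
      · have hfv : lam G c (Pocket.triv i) v = {i, i + 1} := by
          unfold lam; rw [if_neg hvi, if_neg hvi1]
        rw [hfv] at hs
        rw [if_pos ⟨Finset.Subset.refl _, hall⟩] at hs
        exact absurd hs (by simp)
  | @node i m j him hmj L R ihL ihR =>
    intro v s hs hjs
    have hjlam : j ∉ lam G c (Pocket.node him hmj L R) v := by
      unfold lamPlus push at hs
      split_ifs at hs with h1 h2
      · intro hj
        injection hs with h
        exact hjs (h ▸ Finset.mem_inter.2 ⟨hj, by simp⟩)
      · intro hj
        injection hs with h
        exact hjs (h ▸ hj)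
    by_cases hL : lamPlus G c L v = none
    · have hLd : push G i m (fun u => lam G c L u) v = none := hL
      unfold lam at hjlam
      rw [hLd] at hjlam
      simp only [Option.getD_none] at hjlam
      rcases hR : push G m j (fun u => lam G c R u) v with _ | s'
      · rw [hR] at hjlam
        simp only [Option.getD_none] at hjlam
        rw [if_pos ⟨j, Finset.mem_inter.2 ⟨by simp, by simp⟩⟩] at hjlam
        exact absurd (Finset.mem_inter.2 ⟨by simp, by simp⟩) hjlam
      · rw [hR] at hjlam
        simp only [Option.getD_some] at hjlam
        have hjs' : j ∉ s' := by
          intro hj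
          by_cases hc : (({i, m, j} : Finset ℕ) ∩ s').Nonempty
          · rw [if_pos hc] at hjlam
            exact hjlam (Finset.mem_inter.2 ⟨by simp, hj⟩)
          · exact hc ⟨j, Finset.mem_inter.2 ⟨by simp, hj⟩⟩
        have hR' : lamPlus G c R v = some s' := hR
        rcases ihR v s' hR' hjs' with h | ⟨a, b, hab, hbj, QL, QR, hma, hsub, hne⟩
        · exact Or.inl h
        · exact Or.inr ⟨a, b, hab, hbj, QL, QR, le_trans him.le hma,
            Sub.right him hmj hsub, hne⟩
    · exact Or.inr ⟨i, m, him, hmj, L, R, le_refl i, Sub.refl _, hL⟩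

open Pocket in
/-- If the well-behaved sketch `Λ⁺_Q` of a sketchable pocket `Q = Q_{(p_i,p_j)}`
(`i < j < i + t`) assigns `v` to a simplex not containing `p_j`, then `v = c_{j-1}`,
or there is a triangle `{p_a, p_b, p_j}` in `Q` with `i ≤ a < b < j` such that
`Λ⁺_{Q'}(v) ≠ T_{Q'}^+` for the subpocket `Q' = Q_{(p_a,p_b)}`. -/
theorem stmt5 {V : Type*} (G : SimpleGraph V) (t : ℕ) (c : ℕ → V)
    (hadj : ∀ ℓ, G.Adj (c ℓ) (c (ℓ + 1)))
    (i j : ℕ) (hij : i < j) (hjt : j < i + t)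
    (Q : Pocket i j) (hQ : HasSketch G c Q)
    (v : V) (s : Finset ℕ)
    (hs : lamPlus G c Q v = some s) (hjs : j ∉ s) :
    v = c (j - 1) ∨
      ∃ (a b : ℕ) (hab : a < b) (hbj : b < j) (QL : Pocket a b) (QR : Pocket b j),
        i ≤ a ∧ Sub (Pocket.node hab hbj QL QR) Q ∧ lamPlus G c QL v ≠ none := by
  exact stmt5_aux G c Q v s hs hjs
end

section
/- Let Q = Q_{(p_i,p_j)} be a pocket with i < j < i+t that admits a sketch. If Λ⁺_Q(v) ≠ T_Q^+ for some vertex v of G, then v is pulled by Q; that is, either there exists k ∈ [i,j] with d_G(v,c_k) ≤ min(k−i, j−k), or there exist k, l ∈ [i,j] with d_G(v,c_k) ≤ min(k−i+1, j−k−1) and d_G(v,c_l) ≤ min(l−i−1, j−l+1). -/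
open scoped Classical

/-- `v` is pulled by the pocket `Q_{(p_i,p_j)}`. -/
def PulledBy {V : Type*} (G : SimpleGraph V) (c : ℕ → V) (i j : ℕ) (v : V) : Prop :=
  (∃ k, i ≤ k ∧ k ≤ j ∧ G.dist v (c k) ≤ min (k - i) (j - k)) ∨
  (∃ k l, i ≤ k ∧ k ≤ j ∧ i ≤ l ∧ l ≤ j ∧
    G.dist v (c k) ≤ min (k - i + 1) (j - k - 1) ∧
    G.dist v (c l) ≤ min (l - i - 1) (j - l + 1))

namespace Stmt6Aux

open Pocket

variable {V : Type*} {G : SimpleGraph V} {c : ℕ → V}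

/-! ### distance helpers -/

lemma dist_adj {v u : V} (h : G.Adj v u) (x : V) : G.dist v x ≤ G.dist u x + 1 := by
  by_cases hr : G.Reachable u x
  · obtain ⟨p, hp⟩ := hr.exists_walk_length_eq_dist
    have := SimpleGraph.dist_le (SimpleGraph.Walk.cons h p)
    simpa [hp] using this
  · have h1 : G.dist u x = 0 := SimpleGraph.dist_eq_zero_of_not_reachable hr
    have h2 : ¬ G.Reachable v x := fun hvx => hr ((h.symm.reachable).trans hvx)
    simp [SimpleGraph.dist_eq_zero_of_not_reachable h2]

/-! ### push helpers -/

lemma push_eq_none_iff {f : V → Finset ℕ} {a b : ℕ} {v : V} :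
    push G a b f v = none ↔
      (({a, b} : Finset ℕ) ⊆ f v ∧ ∀ u, G.Adj u v → (f u ∩ {a, b}).Nonempty) := by
  unfold push
  by_cases h : (({a, b} : Finset ℕ) ⊆ f v ∧ ∀ u, G.Adj u v → (f u ∩ {a, b}).Nonempty)
  · rw [if_pos h]; simpa using h
  · rw [if_neg h]
    constructor
    · intro hh
      by_cases h2 : (f v ∩ ({a, b} : Finset ℕ)).Nonempty
      · rw [if_pos h2] at hh; exact absurd hh (by simp)
      · rw [if_neg h2] at hh; exact absurd hh (by simp)
    · intro hh; exact absurd hh h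

lemma push_ne_none_cases {f : V → Finset ℕ} {a b : ℕ} {v : V}
    (h : push G a b f v ≠ none) :
    (a ∉ f v ∨ b ∉ f v) ∨ ∃ u, G.Adj u v ∧ f u ∩ {a, b} = ∅ := by
  rw [ne_eq, push_eq_none_iff, not_and_or] at h
  rcases h with h | h
  · left
    by_contra hc
    push_neg at hc
    exact h (by simp [Finset.insert_subset_iff, hc.1, hc.2])
  · right
    push_neg at h
    obtain ⟨u, hu1, hu2⟩ := h
    exact ⟨u, hu1, hu2⟩

lemma push_of_none {f : V → Finset ℕ} {a b : ℕ} {v : V}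
    (h : push G a b f v = none) : ({a, b} : Finset ℕ) ⊆ f v :=
  (push_eq_none_iff.mp h).1

lemma push_getD_cases (f : V → Finset ℕ) (a b : ℕ) (g : Finset ℕ) (v : V) :
    (push G a b f v = none ∧ (push G a b f v).getD g = g) ∨
    ((push G a b f v).getD g = f v ∩ {a, b} ∧ (f v ∩ ({a, b} : Finset ℕ)).Nonempty
        ∧ push G a b f v ≠ none) ∨
    ((push G a b f v).getD g = f v ∧ (f v ∩ ({a, b} : Finset ℕ)) = ∅
        ∧ push G a b f v ≠ none) := by
  unfold push
  by_cases h1 : (({a, b} : Finset ℕ) ⊆ f v ∧ ∀ u, G.Adj u v → (f u ∩ {a, b}).Nonempty)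
  · rw [if_pos h1]; left; exact ⟨rfl, rfl⟩
  · rw [if_neg h1]
    by_cases h2 : (f v ∩ ({a, b} : Finset ℕ)).Nonempty
    · rw [if_pos h2]; right; left; exact ⟨rfl, h2, by simp⟩
    · rw [if_neg h2]; right; right
      exact ⟨rfl, Finset.not_nonempty_iff_eq_empty.mp h2, by simp⟩

/-! ### bounds on triangles and lam values -/

lemma tris_bounds : ∀ {a b : ℕ} (P : Pocket a b), ∀ T ∈ tris P, ∀ x ∈ T, a ≤ x ∧ x ≤ b := by
  intro a b P
  induction P with
  | triv a => intro T hT; simp [tris] at hT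
  | @node i m j him hmj L R ihL ihR =>
    intro T hT x hx
    rcases (by simpa [tris] using hT : _ ∨ _ ∨ _) with rfl | hL | hR
    · simp only [Finset.mem_insert, Finset.mem_singleton] at hx
      rcases hx with rfl | rfl | rfl <;> omega
    · have := ihL T hL x hx; omega
    · have := ihR T hR x hx; omega

lemma tris_left {i m j : ℕ} (him : i < m) (hmj : m < j) (L : Pocket i m) (R : Pocket m j) :
    ∀ T ∈ tris (node him hmj L R), ∀ x ∈ T, i < x → x < m → T ∈ tris L := by
  intro T hT x hx h1 h2
  rcases (by simpa [tris] using hT : _ ∨ _ ∨ _) with rfl | hL | hR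
  · simp only [Finset.mem_insert, Finset.mem_singleton] at hx
    rcases hx with rfl | rfl | rfl <;> omega
  · exact hL
  · have := tris_bounds R T hR x hx; omega

lemma tris_right {i m j : ℕ} (him : i < m) (hmj : m < j) (L : Pocket i m) (R : Pocket m j) :
    ∀ T ∈ tris (node him hmj L R), ∀ x ∈ T, m < x → x < j → T ∈ tris R := by
  intro T hT x hx h1 h2
  rcases (by simpa [tris] using hT : _ ∨ _ ∨ _) with rfl | hL | hR
  · simp only [Finset.mem_insert, Finset.mem_singleton] at hx
    rcases hx with rfl | rfl | rfl <;> omega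
  · have := tris_bounds L T hL x hx; omega
  · exact hR

lemma lam_triv_eq (a : ℕ) (v : V) :
    lam G c (triv a) v
      = if v = c a then {a} else if v = c (a + 1) then {a + 1} else {a, a + 1} := rfl

lemma lam_node_eq {i m j : ℕ} (him : i < m) (hmj : m < j) (L : Pocket i m) (R : Pocket m j)
    (v : V) :
    lam G c (node him hmj L R) v =
      (if (((push G i m (fun u => lam G c L u) v).getD {i, m, j})
            ∩ ((push G m j (fun u => lam G c R u) v).getD {i, m, j})).Nonempty
       then ((push G i m (fun u => lam G c L u) v).getD {i, m, j})
            ∩ ((push G m j (fun u => lam G c R u) v).getD {i, m, j})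
       else if ((push G m j (fun u => lam G c R u) v).getD {i, m, j}) = ({i, m, j} : Finset ℕ)
       then (push G i m (fun u => lam G c L u) v).getD {i, m, j}
       else if ((push G i m (fun u => lam G c L u) v).getD {i, m, j}) = ({i, m, j} : Finset ℕ)
       then (push G m j (fun u => lam G c R u) v).getD {i, m, j}
       else ∅) := rfl

lemma lam_bounds : ∀ {a b : ℕ} (P : Pocket a b) (v : V), ∀ x ∈ lam G c P v, a ≤ x ∧ x ≤ b := by
  intro a b P
  induction P with
  | triv a =>
    intro v x hx
    rw [lam_triv_eq] at hx
    split_ifs at hx <;> simp at hx <;> omega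
  | @node i m j him hmj L R ihL ihR =>
    intro v x hx
    rw [lam_node_eq] at hx
    have hA : ∀ y ∈ (push G i m (fun u => lam G c L u) v).getD {i, m, j},
        i ≤ y ∧ y ≤ j := by
      intro y hy
      rcases push_getD_cases (G := G) (fun u => lam G c L u) i m ({i, m, j} : Finset ℕ) v with
        ⟨_, he⟩ | ⟨he, _, _⟩ | ⟨he, _, _⟩ <;> rw [he] at hy
      · simp at hy; omega
      · have := ihL v y (Finset.mem_inter.mp hy).1; omega
      · have := ihL v y hy; omega
    have hB : ∀ y ∈ (push G m j (fun u => lam G c R u) v).getD {i, m, j},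
        i ≤ y ∧ y ≤ j := by
      intro y hy
      rcases push_getD_cases (G := G) (fun u => lam G c R u) m j ({i, m, j} : Finset ℕ) v with
        ⟨_, he⟩ | ⟨he, _, _⟩ | ⟨he, _, _⟩ <;> rw [he] at hy
      · simp at hy; omega
      · have := ihR v y (Finset.mem_inter.mp hy).1; omega
      · have := ihR v y hy; omega
    split_ifs at hx
    · exact hA x (Finset.mem_inter.mp hx).1
    · exact hA x hx
    · exact hB x hx
    · simp at hx

end Stmt6Aux
namespace Stmt6Aux

open Pocket

variable {V : Type*} {G : SimpleGraph V} {c : ℕ → V}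

section chars

variable {i m j : ℕ} (him : i < m) (hmj : m < j) (L : Pocket i m) (R : Pocket m j)

include him hmj
set_option linter.unusedSectionVars false

lemma A_eq_gen_iff (v : V) :
    (push G i m (fun u => lam G c L u) v).getD {i, m, j} = ({i, m, j} : Finset ℕ)
      ↔ push G i m (fun u => lam G c L u) v = none := by
  rcases push_getD_cases (G := G) (fun u => lam G c L u) i m ({i, m, j} : Finset ℕ) v with
    ⟨hn, he⟩ | ⟨he, hne, hns⟩ | ⟨he, hemp, hns⟩ <;> rw [he]
  · simp [hn]
  · constructor
    · intro hgen
      have hj : j ∈ lam G c L v ∩ {i, m} := by rw [hgen]; simp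
      have := Finset.mem_inter.mp hj
      simp only [Finset.mem_insert, Finset.mem_singleton] at this
      omega
    · intro hn; exact absurd hn hns
  · constructor
    · intro hgen
      have hj : j ∈ lam G c L v := by rw [hgen]; simp
      have := lam_bounds L v j hj
      omega
    · intro hn; exact absurd hn hns

lemma B_eq_gen_iff (v : V) :
    (push G m j (fun u => lam G c R u) v).getD {i, m, j} = ({i, m, j} : Finset ℕ)
      ↔ push G m j (fun u => lam G c R u) v = none := by
  rcases push_getD_cases (G := G) (fun u => lam G c R u) m j ({i, m, j} : Finset ℕ) v with
    ⟨hn, he⟩ | ⟨he, hne, hns⟩ | ⟨he, hemp, hns⟩ <;> rw [he]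
  · simp [hn]
  · constructor
    · intro hgen
      have hj : i ∈ lam G c R v ∩ {m, j} := by rw [hgen]; simp
      have := Finset.mem_inter.mp hj
      simp only [Finset.mem_insert, Finset.mem_singleton] at this
      omega
    · intro hn; exact absurd hn hns
  · constructor
    · intro hgen
      have hj : i ∈ lam G c R v := by rw [hgen]; simp
      have := lam_bounds R v i hj
      omega
    · intro hn; exact absurd hn hns

lemma mem_i_A_iff (v : V) :
    i ∈ (push G i m (fun u => lam G c L u) v).getD {i, m, j} ↔ i ∈ lam G c L v := by
  rcases push_getD_cases (G := G) (fun u => lam G c L u) i m ({i, m, j} : Finset ℕ) v with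
    ⟨hn, he⟩ | ⟨he, hne, hns⟩ | ⟨he, hemp, hns⟩ <;> rw [he]
  · constructor
    · intro _; exact push_of_none hn (by simp)
    · intro _; simp
  · simp only [Finset.mem_inter, Finset.mem_insert, Finset.mem_singleton]
    tauto

lemma mem_j_A_iff (v : V) :
    j ∈ (push G i m (fun u => lam G c L u) v).getD {i, m, j}
      ↔ push G i m (fun u => lam G c L u) v = none := by
  rcases push_getD_cases (G := G) (fun u => lam G c L u) i m ({i, m, j} : Finset ℕ) v with
    ⟨hn, he⟩ | ⟨he, hne, hns⟩ | ⟨he, hemp, hns⟩ <;> rw [he]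
  · simp [hn]
  · constructor
    · intro hj
      have := Finset.mem_inter.mp hj
      simp only [Finset.mem_insert, Finset.mem_singleton] at this
      omega
    · intro hn; exact absurd hn hns
  · constructor
    · intro hj; have := lam_bounds L v j hj; omega
    · intro hn; exact absurd hn hns

lemma mem_j_B_iff (v : V) :
    j ∈ (push G m j (fun u => lam G c R u) v).getD {i, m, j} ↔ j ∈ lam G c R v := by
  rcases push_getD_cases (G := G) (fun u => lam G c R u) m j ({i, m, j} : Finset ℕ) v with
    ⟨hn, he⟩ | ⟨he, hne, hns⟩ | ⟨he, hemp, hns⟩ <;> rw [he]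
  · constructor
    · intro _; exact push_of_none hn (by simp)
    · intro _; simp
  · simp only [Finset.mem_inter, Finset.mem_insert, Finset.mem_singleton]
    tauto

lemma mem_i_B_iff (v : V) :
    i ∈ (push G m j (fun u => lam G c R u) v).getD {i, m, j}
      ↔ push G m j (fun u => lam G c R u) v = none := by
  rcases push_getD_cases (G := G) (fun u => lam G c R u) m j ({i, m, j} : Finset ℕ) v with
    ⟨hn, he⟩ | ⟨he, hne, hns⟩ | ⟨he, hemp, hns⟩ <;> rw [he]
  · simp [hn]
  · constructor
    · intro hj
      have := Finset.mem_inter.mp hj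
      simp only [Finset.mem_insert, Finset.mem_singleton] at this
      omega
    · intro hn; exact absurd hn hns
  · constructor
    · intro hj; have := lam_bounds R v i hj; omega
    · intro hn; exact absurd hn hns

lemma mem_i_lam_node_iff (v : V) :
    i ∈ lam G c (node him hmj L R) v
      ↔ (push G m j (fun u => lam G c R u) v = none ∧ i ∈ lam G c L v) := by
  rw [lam_node_eq]
  split_ifs with h1 h2 h3
  · rw [Finset.mem_inter, mem_i_A_iff him hmj L, mem_i_B_iff him hmj R]
    exact and_comm
  · constructor
    · intro hiA
      exfalso
      have hiB : i ∈ (push G m j (fun u => lam G c R u) v).getD {i, m, j} := by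
        rw [mem_i_B_iff him hmj R, ← B_eq_gen_iff him hmj R]
        exact h2
      exact h1 ⟨i, Finset.mem_inter.mpr ⟨hiA, hiB⟩⟩
    · intro ⟨hR, hiL⟩
      exfalso
      have hiA : i ∈ (push G i m (fun u => lam G c L u) v).getD {i, m, j} :=
        (mem_i_A_iff him hmj L v).mpr hiL
      have hiB : i ∈ (push G m j (fun u => lam G c R u) v).getD {i, m, j} := by
        rw [mem_i_B_iff him hmj R]; exact hR
      exact h1 ⟨i, Finset.mem_inter.mpr ⟨hiA, hiB⟩⟩
  · constructor
    · intro hiB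
      exact absurd ((B_eq_gen_iff him hmj R v).mpr
        ((mem_i_B_iff him hmj R v).mp hiB)) h2
    · intro ⟨hR, _⟩
      exact absurd ((B_eq_gen_iff him hmj R v).mpr hR) h2
  · simp only [Finset.notMem_empty, false_iff, not_and]
    intro hR
    exact absurd ((B_eq_gen_iff him hmj R v).mpr hR) h2

lemma mem_j_lam_node_iff (v : V) :
    j ∈ lam G c (node him hmj L R) v
      ↔ (push G i m (fun u => lam G c L u) v = none ∧ j ∈ lam G c R v) := by
  rw [lam_node_eq]
  split_ifs with h1 h2 h3
  · rw [Finset.mem_inter, mem_j_A_iff him hmj L, mem_j_B_iff him hmj R]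
  · constructor
    · intro hjA
      exfalso
      have hL := (mem_j_A_iff him hmj L v).mp hjA
      have hjB : j ∈ (push G m j (fun u => lam G c R u) v).getD {i, m, j} := by
        rw [h2]; simp
      exact h1 ⟨j, Finset.mem_inter.mpr ⟨hjA, hjB⟩⟩
    · intro ⟨hL, hjR⟩
      exfalso
      have hjA : j ∈ (push G i m (fun u => lam G c L u) v).getD {i, m, j} := by
        rw [mem_j_A_iff him hmj L]; exact hL
      have hjB : j ∈ (push G m j (fun u => lam G c R u) v).getD {i, m, j} := by
        rw [h2]; simp
      exact h1 ⟨j, Finset.mem_inter.mpr ⟨hjA, hjB⟩⟩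
  · constructor
    · intro hjB
      exfalso
      have hjB' := (mem_j_B_iff him hmj R v).mp hjB
      have hjA : j ∈ (push G i m (fun u => lam G c L u) v).getD {i, m, j} := by
        rw [h3]; simp
      exact h1 ⟨j, Finset.mem_inter.mpr ⟨hjA, hjB⟩⟩
    · intro ⟨hL, hjR⟩
      exfalso
      have hjA : j ∈ (push G i m (fun u => lam G c L u) v).getD {i, m, j} := by
        rw [mem_j_A_iff him hmj L]; exact hL
      have hjB : j ∈ (push G m j (fun u => lam G c R u) v).getD {i, m, j} :=
        (mem_j_B_iff him hmj R v).mpr hjR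
      exact h1 ⟨j, Finset.mem_inter.mpr ⟨hjA, hjB⟩⟩
  · simp only [Finset.notMem_empty, false_iff, not_and]
    intro hL
    exact absurd ((A_eq_gen_iff him hmj L v).mpr hL) h3

lemma lid_subset_lam_node_iff (v : V) :
    ({i, j} : Finset ℕ) ⊆ lam G c (node him hmj L R) v
      ↔ (push G i m (fun u => lam G c L u) v = none
          ∧ push G m j (fun u => lam G c R u) v = none) := by
  rw [Finset.insert_subset_iff, Finset.singleton_subset_iff,
    mem_i_lam_node_iff him hmj L R, mem_j_lam_node_iff him hmj L R]
  constructor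
  · rintro ⟨⟨hR, _⟩, ⟨hL, _⟩⟩
    exact ⟨hL, hR⟩
  · rintro ⟨hL, hR⟩
    exact ⟨⟨hR, push_of_none hL (by simp)⟩, ⟨hL, push_of_none hR (by simp)⟩⟩

end chars

section trivial

variable {a : ℕ}

lemma lam_triv_inter_nonempty (a : ℕ) (v : V) :
    ((lam G c (triv a) v) ∩ ({a, a + 1} : Finset ℕ)).Nonempty := by
  rw [lam_triv_eq]
  split_ifs
  · exact ⟨a, by simp⟩
  · exact ⟨a + 1, by simp⟩
  · exact ⟨a, by simp⟩

lemma lam_triv_b_not_mem {v : V} (h : (a + 1) ∉ lam G c (triv a) v) : v = c a := by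
  rw [lam_triv_eq] at h
  split_ifs at h with h1 h2
  · exact h1
  · simp at h
  · simp at h

lemma lam_triv_a_not_mem {v : V} (h : a ∉ lam G c (triv a) v) :
    v ≠ c a ∧ v = c (a + 1) := by
  rw [lam_triv_eq] at h
  split_ifs at h with h1 h2
  · simp at h
  · exact ⟨h1, h2⟩
  · simp at h

lemma bad_nontriv {a b : ℕ} (P : Pocket a b) (u : V)
    (h : lam G c P u ∩ ({a, b} : Finset ℕ) = ∅) : a + 2 ≤ b := by
  cases P with
  | triv a => exact absurd h (lam_triv_inter_nonempty a u).ne_empty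
  | node him hmj L R => omega

end trivial

end Stmt6Aux
namespace Stmt6Aux

open Pocket

variable {V : Type*} {G : SimpleGraph V} {c : ℕ → V}

/-! ### Compat unfolding -/

lemma compat_none_none {i j : ℕ} (Q : Pocket i j) : Compat Q none none := trivial

lemma compat_none_some {i j : ℕ} {Q : Pocket i j} {s : Finset ℕ} :
    Compat Q none (some s) ↔ s ⊆ ({i, j} : Finset ℕ) := Iff.rfl

lemma compat_some_none {i j : ℕ} {Q : Pocket i j} {s : Finset ℕ} :
    Compat Q (some s) none ↔ s ⊆ ({i, j} : Finset ℕ) := Iff.rfl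

lemma compat_some_some {i j : ℕ} {Q : Pocket i j} {s s' : Finset ℕ} :
    Compat Q (some s) (some s') ↔
      ((s ⊆ ({i, j} : Finset ℕ) ∧ s' ⊆ ({i, j} : Finset ℕ)) ∨
        ∃ T ∈ tris Q, s ⊆ T ∧ s' ⊆ T) := Iff.rfl

/-! ### Restriction of a sketch to the left/right child pocket -/

noncomputable def restrictL (i m : ℕ) (Δ : V → Option (Finset ℕ)) (v : V) :
    Option (Finset ℕ) :=
  (Δ v).bind (fun s => if ∃ x ∈ s, i < x ∧ x < m then some s
    else if (s ∩ ({i, m} : Finset ℕ)).Nonempty then some (s ∩ {i, m}) else none)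

noncomputable def restrictR (m j : ℕ) (Δ : V → Option (Finset ℕ)) (v : V) :
    Option (Finset ℕ) :=
  (Δ v).bind (fun s => if ∃ x ∈ s, m < x ∧ x < j then some s
    else if (s ∩ ({m, j} : Finset ℕ)).Nonempty then some (s ∩ {m, j}) else none)

lemma restrictL_cases (i m : ℕ) (Δ : V → Option (Finset ℕ)) (w : V) :
    (restrictL i m Δ w = none ∧ (Δ w = none ∨ ∃ s, Δ w = some s
        ∧ (¬ ∃ x ∈ s, i < x ∧ x < m) ∧ s ∩ ({i, m} : Finset ℕ) = ∅)) ∨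
    (∃ s, Δ w = some s ∧ restrictL i m Δ w = some s ∧ ∃ x ∈ s, i < x ∧ x < m) ∨
    (∃ s, Δ w = some s ∧ restrictL i m Δ w = some (s ∩ {i, m})
        ∧ (¬ ∃ x ∈ s, i < x ∧ x < m) ∧ (s ∩ ({i, m} : Finset ℕ)).Nonempty) := by
  cases hw : Δ w with
  | none => left; exact ⟨by simp [restrictL, hw], Or.inl rfl⟩
  | some s =>
    by_cases h1 : ∃ x ∈ s, i < x ∧ x < m
    · right; left; exact ⟨s, rfl, by simp [restrictL, hw, if_pos h1], h1⟩
    · by_cases h2 : (s ∩ ({i, m} : Finset ℕ)).Nonempty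
      · right; right
        exact ⟨s, rfl, by simp only [restrictL, hw, Option.bind_some, if_neg h1, if_pos h2], h1, h2⟩
      · left
        refine ⟨by simp only [restrictL, hw, Option.bind_some, if_neg h1, if_neg h2], Or.inr ?_⟩
        exact ⟨s, rfl, h1, Finset.not_nonempty_iff_eq_empty.mp h2⟩

lemma restrictR_cases (m j : ℕ) (Δ : V → Option (Finset ℕ)) (w : V) :
    (restrictR m j Δ w = none ∧ (Δ w = none ∨ ∃ s, Δ w = some s
        ∧ (¬ ∃ x ∈ s, m < x ∧ x < j) ∧ s ∩ ({m, j} : Finset ℕ) = ∅)) ∨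
    (∃ s, Δ w = some s ∧ restrictR m j Δ w = some s ∧ ∃ x ∈ s, m < x ∧ x < j) ∨
    (∃ s, Δ w = some s ∧ restrictR m j Δ w = some (s ∩ {m, j})
        ∧ (¬ ∃ x ∈ s, m < x ∧ x < j) ∧ (s ∩ ({m, j} : Finset ℕ)).Nonempty) := by
  cases hw : Δ w with
  | none => left; exact ⟨by simp [restrictR, hw], Or.inl rfl⟩
  | some s =>
    by_cases h1 : ∃ x ∈ s, m < x ∧ x < j
    · right; left; exact ⟨s, rfl, by simp [restrictR, hw, if_pos h1], h1⟩
    · by_cases h2 : (s ∩ ({m, j} : Finset ℕ)).Nonempty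
      · right; right
        exact ⟨s, rfl, by simp only [restrictR, hw, Option.bind_some, if_neg h1, if_pos h2], h1, h2⟩
      · left
        refine ⟨by simp only [restrictR, hw, Option.bind_some, if_neg h1, if_neg h2], Or.inr ?_⟩
        exact ⟨s, rfl, h1, Finset.not_nonempty_iff_eq_empty.mp h2⟩

lemma restrictL_none_of {i m : ℕ} {Δ : V → Option (Finset ℕ)} {w : V}
    (h : Δ w = none) : restrictL i m Δ w = none := by simp [restrictL, h]

lemma restrictR_none_of {m j : ℕ} {Δ : V → Option (Finset ℕ)} {w : V}
    (h : Δ w = none) : restrictR m j Δ w = none := by simp [restrictR, h]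

lemma keepL {i m : ℕ} {Δ : V → Option (Finset ℕ)} {w : V} {τ : Finset ℕ}
    (h : restrictL i m Δ w = some τ) (hx : ∃ x ∈ τ, i < x ∧ x < m) : Δ w = some τ := by
  rcases restrictL_cases i m Δ w with ⟨hn, _⟩ | ⟨s, hd, hr, _⟩ | ⟨s, hd, hr, hni, _⟩
  · rw [hn] at h; exact absurd h (by simp)
  · rw [hr] at h; injection h with h; rw [← h]; exact hd
  · rw [hr] at h; injection h with h
    exfalso
    obtain ⟨x, hx1, hx2⟩ := hx
    rw [← h] at hx1
    have := (Finset.mem_inter.mp hx1).2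
    simp only [Finset.mem_insert, Finset.mem_singleton] at this
    omega

lemma keepR {m j : ℕ} {Δ : V → Option (Finset ℕ)} {w : V} {τ : Finset ℕ}
    (h : restrictR m j Δ w = some τ) (hx : ∃ x ∈ τ, m < x ∧ x < j) : Δ w = some τ := by
  rcases restrictR_cases m j Δ w with ⟨hn, _⟩ | ⟨s, hd, hr, _⟩ | ⟨s, hd, hr, hni, _⟩
  · rw [hn] at h; exact absurd h (by simp)
  · rw [hr] at h; injection h with h; rw [← h]; exact hd
  · rw [hr] at h; injection h with h
    exfalso
    obtain ⟨x, hx1, hx2⟩ := hx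
    rw [← h] at hx1
    have := (Finset.mem_inter.mp hx1).2
    simp only [Finset.mem_insert, Finset.mem_singleton] at this
    omega

end Stmt6Aux
namespace Stmt6Aux

open Pocket

variable {V : Type*} {G : SimpleGraph V} {c : ℕ → V}

lemma isSketch_restrictL {i m j : ℕ} (him : i < m) (hmj : m < j)
    (L : Pocket i m) (R : Pocket m j) {Δ : V → Option (Finset ℕ)}
    (hΔ : IsLocalSketch G c (node him hmj L R) Δ) :
    IsLocalSketch G c L (restrictL i m Δ) := by
  obtain ⟨hcor, hval, hcmp⟩ := hΔ
  refine ⟨?_, ?_, ?_⟩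
  · -- corners
    intro ℓ h1 h2
    have hc := hcor ℓ h1 (h2.trans hmj.le)
    by_cases hint : i < ℓ ∧ ℓ < m
    · simp only [restrictL, hc, Option.bind_some]
      rw [if_pos ⟨ℓ, by simp, hint⟩]
    · have hℓ : ℓ = i ∨ ℓ = m := by omega
      have hin : (({ℓ} : Finset ℕ) ∩ {i, m}) = {ℓ} := by
        apply Finset.inter_eq_left.mpr
        rcases hℓ with rfl | rfl <;> simp
      simp only [restrictL, hc, Option.bind_some]
      rw [if_neg, if_pos]
      · rw [hin]
      · rw [hin]; exact ⟨ℓ, by simp⟩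
      · rintro ⟨x, hx, hx1, hx2⟩
        simp only [Finset.mem_singleton] at hx
        omega
  · -- values
    intro v s hs
    rcases restrictL_cases i m Δ v with ⟨hn, _⟩ | ⟨s0, hd, hr, x, hx, hx1, hx2⟩
      | ⟨s0, hd, hr, hni, hne⟩
    · rw [hn] at hs; exact absurd hs (by simp)
    · rw [hr] at hs; injection hs with hs; subst hs
      obtain ⟨hne0, hsh⟩ := hval v s0 hd
      refine ⟨hne0, Or.inr ?_⟩
      rcases hsh with hsub | ⟨T, hT, hsT⟩
      · exfalso
        have := hsub hx
        simp only [Finset.mem_insert, Finset.mem_singleton] at this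
        omega
      · exact ⟨T, tris_left him hmj L R T hT x (hsT hx) hx1 hx2, hsT⟩
    · rw [hr] at hs; injection hs with hs; subst hs
      exact ⟨hne, Or.inl Finset.inter_subset_right⟩
  · -- compat
    intro u v huv
    have hc := hcmp u v huv
    rcases restrictL_cases i m Δ u with ⟨hnu, hu⟩ | ⟨su, hdu, hru, xu, hxu, hxu1, hxu2⟩
      | ⟨su, hdu, hru, hniu, hneu⟩ <;>
      rcases restrictL_cases i m Δ v with ⟨hnv, hv⟩ | ⟨sv, hdv, hrv, xv, hxv, hxv1, hxv2⟩
        | ⟨sv, hdv, hrv, hniv, hnev⟩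
    · rw [hnu, hnv]; exact compat_none_none L
    · -- u none / v keep : impossible
      exfalso
      rcases hu with hu | ⟨su, hdu, hniu, hemu⟩
      · rw [hu, hdv, compat_none_some] at hc
        have := hc hxv
        simp only [Finset.mem_insert, Finset.mem_singleton] at this
        omega
      · rw [hdu, hdv, compat_some_some] at hc
        rcases hc with ⟨_, h2⟩ | ⟨T, hT, hsu, hsv⟩
        · have := h2 hxv
          simp only [Finset.mem_insert, Finset.mem_singleton] at this
          omega
        · have hTL := tris_left him hmj L R T hT xv (hsv hxv) hxv1 hxv2
          obtain ⟨y, hy⟩ := (hval u su hdu).1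
          have hyb := tris_bounds L T hTL y (hsu hy)
          have hyim : y = i ∨ y = m := by
            rcases Nat.lt_or_ge i y with h' | h'
            · rcases Nat.lt_or_ge y m with h'' | h''
              · exact absurd ⟨y, hy, h', h''⟩ hniu
              · omega
            · omega
          have : y ∈ su ∩ ({i, m} : Finset ℕ) := by
            rw [Finset.mem_inter]
            exact ⟨hy, by rcases hyim with rfl | rfl <;> simp⟩
          rw [hemu] at this
          simp at this
    · -- u none / v inter
      rw [hnu, hrv, compat_none_some]
      exact Finset.inter_subset_right
    · -- u keep / v none : impossible
      exfalso
      rcases hv with hv | ⟨sv, hdv, hniv, hemv⟩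
      · rw [hv, hdu, compat_some_none] at hc
        have := hc hxu
        simp only [Finset.mem_insert, Finset.mem_singleton] at this
        omega
      · rw [hdu, hdv, compat_some_some] at hc
        rcases hc with ⟨h1, _⟩ | ⟨T, hT, hsu, hsv⟩
        · have := h1 hxu
          simp only [Finset.mem_insert, Finset.mem_singleton] at this
          omega
        · have hTL := tris_left him hmj L R T hT xu (hsu hxu) hxu1 hxu2
          obtain ⟨y, hy⟩ := (hval v sv hdv).1
          have hyb := tris_bounds L T hTL y (hsv hy)
          have hyim : y = i ∨ y = m := by
            rcases Nat.lt_or_ge i y with h' | h'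
            · rcases Nat.lt_or_ge y m with h'' | h''
              · exact absurd ⟨y, hy, h', h''⟩ hniv
              · omega
            · omega
          have : y ∈ sv ∩ ({i, m} : Finset ℕ) := by
            rw [Finset.mem_inter]
            exact ⟨hy, by rcases hyim with rfl | rfl <;> simp⟩
          rw [hemv] at this
          simp at this
    · -- keep / keep
      rw [hru, hrv, compat_some_some]
      rw [hdu, hdv, compat_some_some] at hc
      rcases hc with ⟨h1, _⟩ | ⟨T, hT, hsu, hsv⟩
      · exfalso
        have := h1 hxu
        simp only [Finset.mem_insert, Finset.mem_singleton] at this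
        omega
      · exact Or.inr ⟨T, tris_left him hmj L R T hT xu (hsu hxu) hxu1 hxu2, hsu, hsv⟩
    · -- keep / inter
      rw [hru, hrv, compat_some_some]
      rw [hdu, hdv, compat_some_some] at hc
      rcases hc with ⟨h1, _⟩ | ⟨T, hT, hsu, hsv⟩
      · exfalso
        have := h1 hxu
        simp only [Finset.mem_insert, Finset.mem_singleton] at this
        omega
      · exact Or.inr ⟨T, tris_left him hmj L R T hT xu (hsu hxu) hxu1 hxu2, hsu,
          Finset.inter_subset_left.trans hsv⟩
    · -- inter / none
      rw [hru, hnv, compat_some_none]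
      exact Finset.inter_subset_right
    · -- inter / keep
      rw [hru, hrv, compat_some_some]
      rw [hdu, hdv, compat_some_some] at hc
      rcases hc with ⟨_, h2⟩ | ⟨T, hT, hsu, hsv⟩
      · exfalso
        have := h2 hxv
        simp only [Finset.mem_insert, Finset.mem_singleton] at this
        omega
      · exact Or.inr ⟨T, tris_left him hmj L R T hT xv (hsv hxv) hxv1 hxv2,
          Finset.inter_subset_left.trans hsu, hsv⟩
    · -- inter / inter
      rw [hru, hrv, compat_some_some]
      exact Or.inl ⟨Finset.inter_subset_right, Finset.inter_subset_right⟩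

lemma isSketch_restrictR {i m j : ℕ} (him : i < m) (hmj : m < j)
    (L : Pocket i m) (R : Pocket m j) {Δ : V → Option (Finset ℕ)}
    (hΔ : IsLocalSketch G c (node him hmj L R) Δ) :
    IsLocalSketch G c R (restrictR m j Δ) := by
  obtain ⟨hcor, hval, hcmp⟩ := hΔ
  refine ⟨?_, ?_, ?_⟩
  · -- corners
    intro ℓ h1 h2
    have hc := hcor ℓ (him.le.trans h1) h2
    by_cases hint : m < ℓ ∧ ℓ < j
    · simp only [restrictR, hc, Option.bind_some]
      rw [if_pos ⟨ℓ, by simp, hint⟩]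
    · have hℓ : ℓ = m ∨ ℓ = j := by omega
      have hin : (({ℓ} : Finset ℕ) ∩ {m, j}) = {ℓ} := by
        apply Finset.inter_eq_left.mpr
        rcases hℓ with rfl | rfl <;> simp
      simp only [restrictR, hc, Option.bind_some]
      rw [if_neg, if_pos]
      · rw [hin]
      · rw [hin]; exact ⟨ℓ, by simp⟩
      · rintro ⟨x, hx, hx1, hx2⟩
        simp only [Finset.mem_singleton] at hx
        omega
  · -- values
    intro v s hs
    rcases restrictR_cases m j Δ v with ⟨hn, _⟩ | ⟨s0, hd, hr, x, hx, hx1, hx2⟩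
      | ⟨s0, hd, hr, hni, hne⟩
    · rw [hn] at hs; exact absurd hs (by simp)
    · rw [hr] at hs; injection hs with hs; subst hs
      obtain ⟨hne0, hsh⟩ := hval v s0 hd
      refine ⟨hne0, Or.inr ?_⟩
      rcases hsh with hsub | ⟨T, hT, hsT⟩
      · exfalso
        have := hsub hx
        simp only [Finset.mem_insert, Finset.mem_singleton] at this
        omega
      · exact ⟨T, tris_right him hmj L R T hT x (hsT hx) hx1 hx2, hsT⟩
    · rw [hr] at hs; injection hs with hs; subst hs
      exact ⟨hne, Or.inl Finset.inter_subset_right⟩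
  · -- compat
    intro u v huv
    have hc := hcmp u v huv
    rcases restrictR_cases m j Δ u with ⟨hnu, hu⟩ | ⟨su, hdu, hru, xu, hxu, hxu1, hxu2⟩
      | ⟨su, hdu, hru, hniu, hneu⟩ <;>
      rcases restrictR_cases m j Δ v with ⟨hnv, hv⟩ | ⟨sv, hdv, hrv, xv, hxv, hxv1, hxv2⟩
        | ⟨sv, hdv, hrv, hniv, hnev⟩
    · rw [hnu, hnv]; exact compat_none_none R
    · exfalso
      rcases hu with hu | ⟨su, hdu, hniu, hemu⟩
      · rw [hu, hdv, compat_none_some] at hc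
        have := hc hxv
        simp only [Finset.mem_insert, Finset.mem_singleton] at this
        omega
      · rw [hdu, hdv, compat_some_some] at hc
        rcases hc with ⟨_, h2⟩ | ⟨T, hT, hsu, hsv⟩
        · have := h2 hxv
          simp only [Finset.mem_insert, Finset.mem_singleton] at this
          omega
        · have hTR := tris_right him hmj L R T hT xv (hsv hxv) hxv1 hxv2
          obtain ⟨y, hy⟩ := (hval u su hdu).1
          have hyb := tris_bounds R T hTR y (hsu hy)
          have hyim : y = m ∨ y = j := by
            rcases Nat.lt_or_ge m y with h' | h'
            · rcases Nat.lt_or_ge y j with h'' | h''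
              · exact absurd ⟨y, hy, h', h''⟩ hniu
              · omega
            · omega
          have : y ∈ su ∩ ({m, j} : Finset ℕ) := by
            rw [Finset.mem_inter]
            exact ⟨hy, by rcases hyim with rfl | rfl <;> simp⟩
          rw [hemu] at this
          simp at this
    · rw [hnu, hrv, compat_none_some]
      exact Finset.inter_subset_right
    · exfalso
      rcases hv with hv | ⟨sv, hdv, hniv, hemv⟩
      · rw [hv, hdu, compat_some_none] at hc
        have := hc hxu
        simp only [Finset.mem_insert, Finset.mem_singleton] at this
        omega
      · rw [hdu, hdv, compat_some_some] at hc
        rcases hc with ⟨h1, _⟩ | ⟨T, hT, hsu, hsv⟩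
        · have := h1 hxu
          simp only [Finset.mem_insert, Finset.mem_singleton] at this
          omega
        · have hTR := tris_right him hmj L R T hT xu (hsu hxu) hxu1 hxu2
          obtain ⟨y, hy⟩ := (hval v sv hdv).1
          have hyb := tris_bounds R T hTR y (hsv hy)
          have hyim : y = m ∨ y = j := by
            rcases Nat.lt_or_ge m y with h' | h'
            · rcases Nat.lt_or_ge y j with h'' | h''
              · exact absurd ⟨y, hy, h', h''⟩ hniv
              · omega
            · omega
          have : y ∈ sv ∩ ({m, j} : Finset ℕ) := by
            rw [Finset.mem_inter]
            exact ⟨hy, by rcases hyim with rfl | rfl <;> simp⟩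
          rw [hemv] at this
          simp at this
    · rw [hru, hrv, compat_some_some]
      rw [hdu, hdv, compat_some_some] at hc
      rcases hc with ⟨h1, _⟩ | ⟨T, hT, hsu, hsv⟩
      · exfalso
        have := h1 hxu
        simp only [Finset.mem_insert, Finset.mem_singleton] at this
        omega
      · exact Or.inr ⟨T, tris_right him hmj L R T hT xu (hsu hxu) hxu1 hxu2, hsu, hsv⟩
    · rw [hru, hrv, compat_some_some]
      rw [hdu, hdv, compat_some_some] at hc
      rcases hc with ⟨h1, _⟩ | ⟨T, hT, hsu, hsv⟩
      · exfalso
        have := h1 hxu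
        simp only [Finset.mem_insert, Finset.mem_singleton] at this
        omega
      · exact Or.inr ⟨T, tris_right him hmj L R T hT xu (hsu hxu) hxu1 hxu2, hsu,
          Finset.inter_subset_left.trans hsv⟩
    · rw [hru, hnv, compat_some_none]
      exact Finset.inter_subset_right
    · rw [hru, hrv, compat_some_some]
      rw [hdu, hdv, compat_some_some] at hc
      rcases hc with ⟨_, h2⟩ | ⟨T, hT, hsu, hsv⟩
      · exfalso
        have := h2 hxv
        simp only [Finset.mem_insert, Finset.mem_singleton] at this
        omega
      · exact Or.inr ⟨T, tris_right him hmj L R T hT xv (hsv hxv) hxv1 hxv2,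
          Finset.inter_subset_left.trans hsu, hsv⟩
    · rw [hru, hrv, compat_some_some]
      exact Or.inl ⟨Finset.inter_subset_right, Finset.inter_subset_right⟩

end Stmt6Aux
namespace Stmt6Aux

open Pocket

variable {V : Type*} {G : SimpleGraph V} {c : ℕ → V}

lemma lamPlus_eq_push {a b : ℕ} (P : Pocket a b) (v : V) :
    lamPlus G c P v = push G a b (fun u => lam G c P u) v := rfl

theorem canon : ∀ {a b : ℕ} (P : Pocket a b) (Δ : V → Option (Finset ℕ)),
    IsLocalSketch G c P Δ →
    ((∀ u, lam G c P u ∩ ({a, b} : Finset ℕ) = ∅ →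
        ∃ σ, Δ u = some σ ∧ ∃ x ∈ σ, a < x ∧ x < b) ∧
     (∀ u, Δ u = none → lamPlus G c P u = none) ∧
     (∀ u, a ∉ lam G c P u → Δ u ≠ some {a}) ∧
     (∀ u, b ∉ lam G c P u → Δ u ≠ some {b}) ∧
     (∀ u, a ∈ lam G c P u → lamPlus G c P u ≠ none →
        u = c a ∨ ∃ w, G.Adj w u ∧ ∃ τ, Δ w = some τ ∧ ∃ x ∈ τ, a < x ∧ x < b) ∧
     (∀ u, b ∈ lam G c P u → lamPlus G c P u ≠ none →
        u = c b ∨ ∃ w, G.Adj w u ∧ ∃ τ, Δ w = some τ ∧ ∃ x ∈ τ, a < x ∧ x < b)) := by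
  intro a b P
  induction P with
  | triv a =>
    intro Δ hΔ
    obtain ⟨hcor, hval, hcmp⟩ := hΔ
    refine ⟨?_, ?_, ?_, ?_, ?_, ?_⟩
    · intro u hemp
      exact absurd hemp (lam_triv_inter_nonempty a u).ne_empty
    · intro u hn
      rw [lamPlus_eq_push]
      apply push_eq_none_iff.mpr
      constructor
      · rw [lam_triv_eq]
        split_ifs with h1 h2
        · exfalso
          have := hcor a le_rfl (by omega)
          rw [← h1, hn] at this
          exact absurd this (by simp)
        · exfalso
          have := hcor (a + 1) (by omega) le_rfl
          rw [← h2, hn] at this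
          exact absurd this (by simp)
        · exact subset_rfl
      · intro w _
        exact lam_triv_inter_nonempty a w
    · intro u ha hd
      obtain ⟨_, h2⟩ := lam_triv_a_not_mem ha
      have := hcor (a + 1) (by omega) le_rfl
      rw [← h2, hd] at this
      injection this with this
      have : (a : ℕ) ∈ ({a + 1} : Finset ℕ) := this ▸ (by simp)
      simp at this
    · intro u hb hd
      have h1 := lam_triv_b_not_mem hb
      have := hcor a le_rfl (by omega)
      rw [← h1, hd] at this
      injection this with this
      have : (a + 1 : ℕ) ∈ ({a} : Finset ℕ) := this ▸ (by simp)
      simp only [Finset.mem_singleton] at this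
      omega
    · intro u hau hnn
      rcases push_ne_none_cases hnn with hsub | ⟨w, hw, hemp⟩
      · rcases hsub with h | h
        · exact absurd hau h
        · exact Or.inl (lam_triv_b_not_mem h)
      · exact absurd hemp (lam_triv_inter_nonempty a w).ne_empty
    · intro u hbu hnn
      rcases push_ne_none_cases hnn with hsub | ⟨w, hw, hemp⟩
      · rcases hsub with h | h
        · exact Or.inl (lam_triv_a_not_mem h).2
        · exact absurd hbu h
      · exact absurd hemp (lam_triv_inter_nonempty a w).ne_empty
  | @node i m j him hmj L R ihL ihR =>
    intro Δ hΔ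
    obtain ⟨monoL, k1L, niL, njL, lldL, lrdL⟩ := ihL _ (isSketch_restrictL him hmj L R hΔ)
    obtain ⟨monoR, k1R, niR, njR, lldR, lrdR⟩ := ihR _ (isSketch_restrictR him hmj L R hΔ)
    obtain ⟨hcor, hval, hcmp⟩ := hΔ
    -- MONO
    have mono : ∀ u, lam G c (node him hmj L R) u ∩ ({i, j} : Finset ℕ) = ∅ →
        ∃ σ, Δ u = some σ ∧ ∃ x ∈ σ, i < x ∧ x < j := by
      intro u hemp
      have hi : i ∉ lam G c (node him hmj L R) u := by
        intro h
        have : i ∈ lam G c (node him hmj L R) u ∩ ({i, j} : Finset ℕ) :=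
          Finset.mem_inter.mpr ⟨h, by simp⟩
        rw [hemp] at this; simp at this
      have hj : j ∉ lam G c (node him hmj L R) u := by
        intro h
        have : j ∈ lam G c (node him hmj L R) u ∩ ({i, j} : Finset ℕ) :=
          Finset.mem_inter.mpr ⟨h, by simp⟩
        rw [hemp] at this; simp at this
      have hune : Δ u ≠ none := by
        intro hn
        have h1 : lamPlus G c L u = none := k1L u (restrictL_none_of hn)
        have h2 : lamPlus G c R u = none := k1R u (restrictR_none_of hn)
        exact hi ((mem_i_lam_node_iff him hmj L R u).mpr
          ⟨h2, push_of_none h1 (by simp)⟩)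
      obtain ⟨σ, hσ⟩ := Option.ne_none_iff_exists'.mp hune
      by_cases hintσ : ∃ x ∈ σ, i < x ∧ x < j
      · exact ⟨σ, hσ, hintσ⟩
      exfalso
      have hσsub : σ ⊆ ({i, j} : Finset ℕ) := by
        intro x hx
        have hbx : i ≤ x ∧ x ≤ j := by
          rcases (hval u σ hσ).2 with hsub | ⟨T, hT, hsT⟩
          · have := hsub hx
            simp only [Finset.mem_insert, Finset.mem_singleton] at this
            omega
          · exact tris_bounds _ T hT x (hsT hx)
        have hnx : ¬(i < x ∧ x < j) := fun hh => hintσ ⟨x, hx, hh⟩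
        simp only [Finset.mem_insert, Finset.mem_singleton]
        omega
      have hσne := (hval u σ hσ).1
      by_cases hiσ : i ∈ σ <;> by_cases hjσ : j ∈ σ
      · -- σ ⊇ {i,j} : ΔL u = some {i}, ΔR u = some {j}
        have hσim : σ ∩ ({i, m} : Finset ℕ) = {i} := by
          ext x
          simp only [Finset.mem_inter, Finset.mem_insert, Finset.mem_singleton]
          constructor
          · rintro ⟨h1, h2⟩
            have := hσsub h1
            simp only [Finset.mem_insert, Finset.mem_singleton] at this
            omega
          · rintro rfl; exact ⟨hiσ, Or.inl rfl⟩
        have hσmj : σ ∩ ({m, j} : Finset ℕ) = {j} := by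
          ext x
          simp only [Finset.mem_inter, Finset.mem_insert, Finset.mem_singleton]
          constructor
          · rintro ⟨h1, h2⟩
            have := hσsub h1
            simp only [Finset.mem_insert, Finset.mem_singleton] at this
            omega
          · rintro rfl; exact ⟨hjσ, Or.inr rfl⟩
        have hDL : restrictL i m Δ u = some {i} := by
          rcases restrictL_cases i m Δ u with ⟨hn, hcase⟩ | ⟨s, hd, hr, x, hx, h1, h2⟩
            | ⟨s, hd, hr, _, _⟩
          · exfalso
            rcases hcase with h | ⟨s, hd, _, hem⟩
            · exact hune h
            · rw [hσ] at hd; injection hd with hd; subst hd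
              rw [hσim] at hem
              simp at hem
          · exfalso
            rw [hσ] at hd; injection hd with hd; subst hd
            exact hintσ ⟨x, hx, h1, h2.trans hmj⟩
          · rw [hσ] at hd; injection hd with hd; subst hd
            rw [hσim] at hr; exact hr
        have hDR : restrictR m j Δ u = some {j} := by
          rcases restrictR_cases m j Δ u with ⟨hn, hcase⟩ | ⟨s, hd, hr, x, hx, h1, h2⟩
            | ⟨s, hd, hr, _, _⟩
          · exfalso
            rcases hcase with h | ⟨s, hd, _, hem⟩
            · exact hune h
            · rw [hσ] at hd; injection hd with hd; subst hd
              rw [hσmj] at hem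
              simp at hem
          · exfalso
            rw [hσ] at hd; injection hd with hd; subst hd
            exact hintσ ⟨x, hx, him.trans h1, h2⟩
          · rw [hσ] at hd; injection hd with hd; subst hd
            rw [hσmj] at hr; exact hr
        -- neither child can be "out"
        have hOL : lamPlus G c L u ≠ none := by
          intro hOL
          have hjR : j ∉ lam G c R u := by
            intro hjR
            exact hj ((mem_j_lam_node_iff him hmj L R u).mpr ⟨hOL, hjR⟩)
          exact njR u hjR hDR
        have hiLu : i ∈ lam G c L u := by
          by_contra hiLu
          exact niL u hiLu hDL
        rcases lldL u hiLu hOL with hui | ⟨w, hw, τ, hτ, x, hx, hx1, hx2⟩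
        · -- u = c i, so σ = {i}, contradicting j ∈ σ
          have := hcor i le_rfl (by omega)
          rw [← hui, hσ] at this
          injection this with this
          rw [this] at hjσ
          simp at hjσ; omega
        · -- neighbor with interior value: contradict compat with σ ∋ j
          have hτ' := keepL hτ ⟨x, hx, hx1, hx2⟩
          have hcpt := hcmp w u hw
          rw [hτ', hσ, compat_some_some] at hcpt
          rcases hcpt with ⟨h1, _⟩ | ⟨T, hT, hsw, hsu⟩
          · have := h1 hx
            simp only [Finset.mem_insert, Finset.mem_singleton] at this
            omega
          · have hTL := tris_left him hmj L R T hT x (hsw hx) hx1 hx2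
            have := tris_bounds L T hTL j (hsu hjσ)
            omega
      · -- σ = {i}
        have hσi : σ = ({i} : Finset ℕ) := by
          ext x
          simp only [Finset.mem_singleton]
          constructor
          · intro hx
            have := hσsub hx
            simp only [Finset.mem_insert, Finset.mem_singleton] at this
            rcases this with h | h
            · exact h
            · exact absurd (h ▸ hx) hjσ
          · rintro rfl; exact hiσ
        subst hσi
        have hDR : restrictR m j Δ u = none := by
          rcases restrictR_cases m j Δ u with ⟨hn, _⟩ | ⟨s, hd, hr, x, hx, h1, h2⟩
            | ⟨s, hd, hr, _, hne2⟩
          · exact hn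
          · exfalso
            rw [hσ] at hd; injection hd with hd; subst hd
            simp only [Finset.mem_singleton] at hx
            omega
          · exfalso
            rw [hσ] at hd; injection hd with hd; subst hd
            obtain ⟨y, hy⟩ := hne2
            have := Finset.mem_inter.mp hy
            simp only [Finset.mem_singleton, Finset.mem_insert] at this
            omega
        have hOR : lamPlus G c R u = none := k1R u hDR
        have hiLu : i ∉ lam G c L u := by
          intro hiLu
          exact hi ((mem_i_lam_node_iff him hmj L R u).mpr ⟨hOR, hiLu⟩)
        have hDL : restrictL i m Δ u = some {i} := by
          rcases restrictL_cases i m Δ u with ⟨hn, hcase⟩ | ⟨s, hd, hr, x, hx, h1, h2⟩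
            | ⟨s, hd, hr, _, _⟩
          · exfalso
            rcases hcase with h | ⟨s, hd, _, hem⟩
            · exact hune h
            · rw [hσ] at hd; injection hd with hd; subst hd
              have : i ∈ ({i} : Finset ℕ) ∩ ({i, m} : Finset ℕ) := by simp
              rw [hem] at this; simp at this
          · exfalso
            rw [hσ] at hd; injection hd with hd; subst hd
            simp only [Finset.mem_singleton] at hx
            omega
          · rw [hσ] at hd; injection hd with hd; subst hd
            have : ({i} : Finset ℕ) ∩ ({i, m} : Finset ℕ) = {i} := by
              apply Finset.inter_eq_left.mpr; simp
            rw [this] at hr; exact hr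
        exact niL u hiLu hDL
      · -- σ = {j}
        have hσj : σ = ({j} : Finset ℕ) := by
          ext x
          simp only [Finset.mem_singleton]
          constructor
          · intro hx
            have := hσsub hx
            simp only [Finset.mem_insert, Finset.mem_singleton] at this
            rcases this with h | h
            · exact absurd (h ▸ hx) hiσ
            · exact h
          · rintro rfl; exact hjσ
        subst hσj
        have hDL : restrictL i m Δ u = none := by
          rcases restrictL_cases i m Δ u with ⟨hn, _⟩ | ⟨s, hd, hr, x, hx, h1, h2⟩
            | ⟨s, hd, hr, _, hne2⟩
          · exact hn
          · exfalso
            rw [hσ] at hd; injection hd with hd; subst hd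
            simp only [Finset.mem_singleton] at hx
            omega
          · exfalso
            rw [hσ] at hd; injection hd with hd; subst hd
            obtain ⟨y, hy⟩ := hne2
            have := Finset.mem_inter.mp hy
            simp only [Finset.mem_singleton, Finset.mem_insert] at this
            omega
        have hOL : lamPlus G c L u = none := k1L u hDL
        have hjRu : j ∉ lam G c R u := by
          intro hjRu
          exact hj ((mem_j_lam_node_iff him hmj L R u).mpr ⟨hOL, hjRu⟩)
        have hDR : restrictR m j Δ u = some {j} := by
          rcases restrictR_cases m j Δ u with ⟨hn, hcase⟩ | ⟨s, hd, hr, x, hx, h1, h2⟩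
            | ⟨s, hd, hr, _, _⟩
          · exfalso
            rcases hcase with h | ⟨s, hd, _, hem⟩
            · exact hune h
            · rw [hσ] at hd; injection hd with hd; subst hd
              have : j ∈ ({j} : Finset ℕ) ∩ ({m, j} : Finset ℕ) := by simp
              rw [hem] at this; simp at this
          · exfalso
            rw [hσ] at hd; injection hd with hd; subst hd
            simp only [Finset.mem_singleton] at hx
            omega
          · rw [hσ] at hd; injection hd with hd; subst hd
            have : ({j} : Finset ℕ) ∩ ({m, j} : Finset ℕ) = {j} := by
              apply Finset.inter_eq_left.mpr; simp
            rw [this] at hr; exact hr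
        exact njR u hjRu hDR
      · -- σ empty
        obtain ⟨x, hx⟩ := hσne
        have := hσsub hx
        simp only [Finset.mem_insert, Finset.mem_singleton] at this
        rcases this with rfl | rfl
        · exact hiσ hx
        · exact hjσ hx
    refine ⟨mono, ?_, ?_, ?_, ?_, ?_⟩
    · -- K1
      intro u hn
      rw [lamPlus_eq_push]
      apply push_eq_none_iff.mpr
      constructor
      · exact (lid_subset_lam_node_iff him hmj L R u).mpr
          ⟨k1L u (restrictL_none_of hn), k1R u (restrictR_none_of hn)⟩
      · intro w hw
        by_contra hne
        rw [Finset.not_nonempty_iff_eq_empty] at hne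
        obtain ⟨τ, hτ, x, hx, hx1, hx2⟩ := mono w hne
        have hcpt := hcmp w u hw
        rw [hτ, hn, compat_some_none] at hcpt
        have := hcpt hx
        simp only [Finset.mem_insert, Finset.mem_singleton] at this
        omega
    · -- NI
      intro u hi hd
      have hDR : restrictR m j Δ u = none := by
        rcases restrictR_cases m j Δ u with ⟨hn, _⟩ | ⟨s, hds, hr, x, hx, h1, h2⟩
          | ⟨s, hds, hr, _, hne2⟩
        · exact hn
        · exfalso
          rw [hd] at hds; injection hds with hds; subst hds
          simp only [Finset.mem_singleton] at hx
          omega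
        · exfalso
          rw [hd] at hds; injection hds with hds; subst hds
          obtain ⟨y, hy⟩ := hne2
          have := Finset.mem_inter.mp hy
          simp only [Finset.mem_singleton, Finset.mem_insert] at this
          omega
      have hOR : lamPlus G c R u = none := k1R u hDR
      have hiLu : i ∉ lam G c L u := by
        intro hiLu
        exact hi ((mem_i_lam_node_iff him hmj L R u).mpr ⟨hOR, hiLu⟩)
      have hDL : restrictL i m Δ u = some {i} := by
        rcases restrictL_cases i m Δ u with ⟨hn, hcase⟩ | ⟨s, hds, hr, x, hx, h1, h2⟩
          | ⟨s, hds, hr, _, _⟩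
        · exfalso
          rcases hcase with h | ⟨s, hds, _, hem⟩
          · rw [hd] at h; exact absurd h (by simp)
          · rw [hd] at hds; injection hds with hds; subst hds
            have : i ∈ ({i} : Finset ℕ) ∩ ({i, m} : Finset ℕ) := by simp
            rw [hem] at this; simp at this
        · exfalso
          rw [hd] at hds; injection hds with hds; subst hds
          simp only [Finset.mem_singleton] at hx
          omega
        · rw [hd] at hds; injection hds with hds; subst hds
          have : ({i} : Finset ℕ) ∩ ({i, m} : Finset ℕ) = {i} := by
            apply Finset.inter_eq_left.mpr; simp
          rw [this] at hr; exact hr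
      exact niL u hiLu hDL
    · -- NJ
      intro u hj hd
      have hDL : restrictL i m Δ u = none := by
        rcases restrictL_cases i m Δ u with ⟨hn, _⟩ | ⟨s, hds, hr, x, hx, h1, h2⟩
          | ⟨s, hds, hr, _, hne2⟩
        · exact hn
        · exfalso
          rw [hd] at hds; injection hds with hds; subst hds
          simp only [Finset.mem_singleton] at hx
          omega
        · exfalso
          rw [hd] at hds; injection hds with hds; subst hds
          obtain ⟨y, hy⟩ := hne2
          have := Finset.mem_inter.mp hy
          simp only [Finset.mem_singleton, Finset.mem_insert] at this
          omega
      have hOL : lamPlus G c L u = none := k1L u hDL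
      have hjRu : j ∉ lam G c R u := by
        intro hjRu
        exact hj ((mem_j_lam_node_iff him hmj L R u).mpr ⟨hOL, hjRu⟩)
      have hDR : restrictR m j Δ u = some {j} := by
        rcases restrictR_cases m j Δ u with ⟨hn, hcase⟩ | ⟨s, hds, hr, x, hx, h1, h2⟩
          | ⟨s, hds, hr, _, _⟩
        · exfalso
          rcases hcase with h | ⟨s, hds, _, hem⟩
          · rw [hd] at h; exact absurd h (by simp)
          · rw [hd] at hds; injection hds with hds; subst hds
            have : j ∈ ({j} : Finset ℕ) ∩ ({m, j} : Finset ℕ) := by simp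
            rw [hem] at this; simp at this
        · exfalso
          rw [hd] at hds; injection hds with hds; subst hds
          simp only [Finset.mem_singleton] at hx
          omega
        · rw [hd] at hds; injection hds with hds; subst hds
          have : ({j} : Finset ℕ) ∩ ({m, j} : Finset ℕ) = {j} := by
            apply Finset.inter_eq_left.mpr; simp
        
          rw [this] at hr; exact hr
      exact njR u hjRu hDR
    · -- LLd
      intro u hiu hnn
      obtain ⟨hORu, hiLu⟩ := (mem_i_lam_node_iff him hmj L R u).mp hiu
      rcases push_ne_none_cases hnn with hsub | ⟨w, hw, hemp⟩
      · have hOL : lamPlus G c L u ≠ none := by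
          intro hOL
          rcases hsub with h | h
          · exact h hiu
          · exact h ((mem_j_lam_node_iff him hmj L R u).mpr
              ⟨hOL, push_of_none hORu (by simp)⟩)
        rcases lldL u hiLu hOL with hui | ⟨w, hw, τ, hτ, x, hx, hx1, hx2⟩
        · exact Or.inl hui
        · exact Or.inr ⟨w, hw, τ, keepL hτ ⟨x, hx, hx1, hx2⟩, x, hx, hx1, hx2.trans hmj⟩
      · obtain ⟨τ, hτ, x, hx, hx1, hx2⟩ := mono w hemp
        exact Or.inr ⟨w, hw, τ, hτ, x, hx, hx1, hx2⟩
    · -- LRd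
      intro u hju hnn
      obtain ⟨hOLu, hjRu⟩ := (mem_j_lam_node_iff him hmj L R u).mp hju
      rcases push_ne_none_cases hnn with hsub | ⟨w, hw, hemp⟩
      · have hOR : lamPlus G c R u ≠ none := by
          intro hOR
          rcases hsub with h | h
          · exact h ((mem_i_lam_node_iff him hmj L R u).mpr
              ⟨hOR, push_of_none hOLu (by simp)⟩)
          · exact h hju
        rcases lrdR u hjRu hOR with hui | ⟨w, hw, τ, hτ, x, hx, hx1, hx2⟩
        · exact Or.inl hui
        · exact Or.inr ⟨w, hw, τ, keepR hτ ⟨x, hx, hx1, hx2⟩, x, hx, him.trans hx1, hx2⟩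
      · obtain ⟨τ, hτ, x, hx, hx1, hx2⟩ := mono w hemp
        exact Or.inr ⟨w, hw, τ, hτ, x, hx, hx1, hx2⟩

end Stmt6Aux
namespace Stmt6Aux

open Pocket

variable {V : Type*} {G : SimpleGraph V} {c : ℕ → V}

lemma not_mem_of_inter_empty {s t : Finset ℕ} (h : s ∩ t = ∅) {x : ℕ} (hx : x ∈ t) :
    x ∉ s := by
  intro hs
  have : x ∈ s ∩ t := Finset.mem_inter.mpr ⟨hs, hx⟩
  rw [h] at this
  simp at this

lemma nobadL {i m j : ℕ} (him : i < m) (hmj : m < j) (L : Pocket i m) (R : Pocket m j)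
    {Δ : V → Option (Finset ℕ)} (hΔ : IsLocalSketch G c (node him hmj L R) Δ)
    {u : V} (hbad : lam G c L u ∩ ({i, m} : Finset ℕ) = ∅) {y : ℕ}
    (hy1 : m < y) (hy2 : y ≤ j) (hadj : G.Adj u (c y)) : False := by
  obtain ⟨monoL, -, -, -, -, -⟩ :=
    canon L (restrictL i m Δ) (isSketch_restrictL him hmj L R hΔ)
  obtain ⟨τ, hτ, x, hx, hx1, hx2⟩ := monoL u hbad
  have hτ' := keepL hτ ⟨x, hx, hx1, hx2⟩
  have hcy := hΔ.1 y (by omega) hy2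
  have hcpt := hΔ.2.2 u (c y) hadj
  rw [hτ', hcy, compat_some_some] at hcpt
  rcases hcpt with ⟨h1, -⟩ | ⟨T, hT, hs1, hs2⟩
  · have := h1 hx
    simp only [Finset.mem_insert, Finset.mem_singleton] at this
    omega
  · have hTL := tris_left him hmj L R T hT x (hs1 hx) hx1 hx2
    have := tris_bounds L T hTL y (hs2 (by simp))
    omega

lemma nobadR {i m j : ℕ} (him : i < m) (hmj : m < j) (L : Pocket i m) (R : Pocket m j)
    {Δ : V → Option (Finset ℕ)} (hΔ : IsLocalSketch G c (node him hmj L R) Δ)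
    {u : V} (hbad : lam G c R u ∩ ({m, j} : Finset ℕ) = ∅) {y : ℕ}
    (hy1 : i ≤ y) (hy2 : y < m) (hadj : G.Adj u (c y)) : False := by
  obtain ⟨monoR, -, -, -, -, -⟩ :=
    canon R (restrictR m j Δ) (isSketch_restrictR him hmj L R hΔ)
  obtain ⟨τ, hτ, x, hx, hx1, hx2⟩ := monoR u hbad
  have hτ' := keepR hτ ⟨x, hx, hx1, hx2⟩
  have hcy := hΔ.1 y hy1 (by omega)
  have hcpt := hΔ.2.2 u (c y) hadj
  rw [hτ', hcy, compat_some_some] at hcpt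
  rcases hcpt with ⟨h1, -⟩ | ⟨T, hT, hs1, hs2⟩
  · have := h1 hx
    simp only [Finset.mem_insert, Finset.mem_singleton] at this
    omega
  · have hTR := tris_right him hmj L R T hT x (hs1 hx) hx1 hx2
    have := tris_bounds R T hTR y (hs2 (by simp))
    omega

lemma lam_succ_a_not_mem {a : ℕ} (P : Pocket a (a + 1)) {v : V}
    (h : a ∉ lam G c P v) : v ≠ c a ∧ v = c (a + 1) := by
  cases P with
  | triv a => exact lam_triv_a_not_mem h
  | node him hmj L R => omega

lemma lam_succ_b_not_mem {a : ℕ} (P : Pocket a (a + 1)) {v : V}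
    (h : (a + 1) ∉ lam G c P v) : v = c a := by
  cases P with
  | triv a => exact lam_triv_b_not_mem h
  | node him hmj L R => omega

/-! ### quantitative predicates -/

def XJ (G : SimpleGraph V) (c : ℕ → V) (a b : ℕ) (v : V) : Prop :=
  (∃ k, a ≤ k ∧ k ≤ b ∧ G.dist v (c k) + a ≤ k ∧ G.dist v (c k) + k + 1 ≤ b) ∨
  (∃ k l, a ≤ k ∧ k ≤ b ∧ a ≤ l ∧ l ≤ b ∧
    G.dist v (c k) + a ≤ k + 1 ∧ G.dist v (c k) + k + 2 ≤ b ∧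
    G.dist v (c l) + a + 1 ≤ l ∧ G.dist v (c l) + l ≤ b)

def XI (G : SimpleGraph V) (c : ℕ → V) (a b : ℕ) (v : V) : Prop :=
  (∃ l, a ≤ l ∧ l ≤ b ∧ G.dist v (c l) + a + 1 ≤ l ∧ G.dist v (c l) + l ≤ b) ∨
  (∃ k l, a ≤ k ∧ k ≤ b ∧ a ≤ l ∧ l ≤ b ∧
    G.dist v (c l) + a + 2 ≤ l ∧ G.dist v (c l) + l ≤ b + 1 ∧
    G.dist v (c k) + a ≤ k ∧ G.dist v (c k) + k + 1 ≤ b)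

def SS (G : SimpleGraph V) (c : ℕ → V) (a b : ℕ) (v : V) : Prop :=
  (∃ k, a ≤ k ∧ k ≤ b ∧ G.dist v (c k) + a + 1 ≤ k ∧ G.dist v (c k) + k + 1 ≤ b) ∨
  (∃ k l, a ≤ k ∧ k ≤ b ∧ a ≤ l ∧ l ≤ b ∧
    G.dist v (c k) + a ≤ k ∧ G.dist v (c k) + k + 2 ≤ b ∧
    G.dist v (c l) + a + 2 ≤ l ∧ G.dist v (c l) + l ≤ b)

/-! ### transfer lemmas -/

lemma xj_mono {a m b : ℕ} {v : V} (h : XJ G c m b v) (ham : a ≤ m) : XJ G c a b v := by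
  rcases h with ⟨k, h1, h2, h3, h4⟩ | ⟨k, l, h1, h2, h3, h4, h5, h6, h7, h8⟩
  · exact Or.inl ⟨k, by omega, by omega, by omega, by omega⟩
  · exact Or.inr ⟨k, l, by omega, by omega, by omega, by omega, by omega, by omega,
      by omega, by omega⟩

lemma xi_mono {a b b' : ℕ} {v : V} (h : XI G c a b v) (hbb : b ≤ b') : XI G c a b' v := by
  rcases h with ⟨l, h1, h2, h3, h4⟩ | ⟨k, l, h1, h2, h3, h4, h5, h6, h7, h8⟩
  · exact Or.inl ⟨l, by omega, by omega, by omega, by omega⟩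
  · exact Or.inr ⟨k, l, by omega, by omega, by omega, by omega, by omega, by omega,
      by omega, by omega⟩

lemma xi_mono_left {a m b : ℕ} {v : V} (h : XI G c m b v) (ham : a ≤ m) : XI G c a b v := by
  rcases h with ⟨l, h1, h2, h3, h4⟩ | ⟨k, l, h1, h2, h3, h4, h5, h6, h7, h8⟩
  · exact Or.inl ⟨l, by omega, by omega, by omega, by omega⟩
  · exact Or.inr ⟨k, l, by omega, by omega, by omega, by omega, by omega, by omega,
      by omega, by omega⟩

lemma xj_weaken_right {a m b : ℕ} {v : V} (h : XJ G c a m v) (hmb : m ≤ b) :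
    XJ G c a b v := by
  rcases h with ⟨k, h1, h2, h3, h4⟩ | ⟨k, l, h1, h2, h3, h4, h5, h6, h7, h8⟩
  · exact Or.inl ⟨k, by omega, by omega, by omega, by omega⟩
  · exact Or.inr ⟨k, l, by omega, by omega, by omega, by omega, by omega, by omega,
      by omega, by omega⟩

lemma xj_of_xi_child {a m b : ℕ} {v : V} (h : XI G c a m v) (hmb : m < b) :
    XJ G c a b v := by
  rcases h with ⟨l, h1, h2, h3, h4⟩ | ⟨k, l, h1, h2, h3, h4, h5, h6, h7, h8⟩
  · exact Or.inl ⟨l, by omega, by omega, by omega, by omega⟩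
  · exact Or.inr ⟨k, l, by omega, by omega, by omega, by omega, by omega, by omega,
      by omega, by omega⟩

lemma xi_of_xj_child {a m b : ℕ} {v : V} (h : XJ G c m b v) (ham : a < m) :
    XI G c a b v := by
  rcases h with ⟨k, h1, h2, h3, h4⟩ | ⟨k, l, h1, h2, h3, h4, h5, h6, h7, h8⟩
  · exact Or.inl ⟨k, by omega, by omega, by omega, by omega⟩
  · exact Or.inr ⟨k, l, by omega, by omega, by omega, by omega, by omega, by omega,
      by omega, by omega⟩

lemma xj_of_ssL {a m b : ℕ} {u v : V} (h : SS G c a m u)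
    (hd : ∀ x, G.dist v (c x) ≤ G.dist u (c x) + 1) (hmb : m < b) : XJ G c a b v := by
  rcases h with ⟨k, h1, h2, h3, h4⟩ | ⟨k, l, h1, h2, h3, h4, h5, h6, h7, h8⟩
  · have hk := hd k
    exact Or.inl ⟨k, by omega, by omega, by omega, by omega⟩
  · have hk := hd k
    have hl := hd l
    exact Or.inr ⟨k, l, by omega, by omega, by omega, by omega, by omega, by omega,
      by omega, by omega⟩

lemma xi_of_ssR {a m b : ℕ} {u v : V} (h : SS G c m b u)
    (hd : ∀ x, G.dist v (c x) ≤ G.dist u (c x) + 1) (ham : a < m) : XI G c a b v := by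
  rcases h with ⟨k, h1, h2, h3, h4⟩ | ⟨k, l, h1, h2, h3, h4, h5, h6, h7, h8⟩
  · have hk := hd k
    exact Or.inl ⟨k, by omega, by omega, by omega, by omega⟩
  · have hk := hd k
    have hl := hd l
    exact Or.inr ⟨k, l, by omega, by omega, by omega, by omega, by omega, by omega,
      by omega, by omega⟩

lemma ss_of_xiL {a m b : ℕ} {v : V} (h : XI G c a m v) (hmb : m < b) : SS G c a b v := by
  rcases h with ⟨l, h1, h2, h3, h4⟩ | ⟨k, l, h1, h2, h3, h4, h5, h6, h7, h8⟩
  · exact Or.inl ⟨l, by omega, by omega, by omega, by omega⟩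
  · exact Or.inr ⟨k, l, by omega, by omega, by omega, by omega, by omega, by omega,
      by omega, by omega⟩

lemma ss_of_xjR {a m b : ℕ} {v : V} (h : XJ G c m b v) (ham : a < m) : SS G c a b v := by
  rcases h with ⟨k, h1, h2, h3, h4⟩ | ⟨k, l, h1, h2, h3, h4, h5, h6, h7, h8⟩
  · exact Or.inl ⟨k, by omega, by omega, by omega, by omega⟩
  · exact Or.inr ⟨k, l, by omega, by omega, by omega, by omega, by omega, by omega,
      by omega, by omega⟩

end Stmt6Aux
namespace Stmt6Aux

open Pocket

variable {V : Type*} {G : SimpleGraph V} {c : ℕ → V}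

theorem main : ∀ {a b : ℕ} (P : Pocket a b) (Δ : V → Option (Finset ℕ)),
    IsLocalSketch G c P Δ →
    ((∀ v, b ∉ lam G c P v → XJ G c a b v) ∧
     (∀ v, a ∉ lam G c P v → XI G c a b v) ∧
     (∀ v, a ∉ lam G c P v → b ∉ lam G c P v → SS G c a b v)) := by
  intro a b P
  induction P with
  | triv a =>
    intro Δ hΔ
    refine ⟨?_, ?_, ?_⟩
    · intro v h
      have hv := lam_triv_b_not_mem h
      subst hv
      refine Or.inl ⟨a, le_rfl, by omega, ?_, ?_⟩ <;>
        rw [SimpleGraph.dist_self] <;> omega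
    · intro v h
      have hv := (lam_triv_a_not_mem h).2
      subst hv
      refine Or.inl ⟨a + 1, by omega, le_rfl, ?_, ?_⟩ <;>
        rw [SimpleGraph.dist_self] <;> omega
    · intro v h1 h2
      exact absurd (lam_triv_b_not_mem h2) (lam_triv_a_not_mem h1).1
  | @node i m j him hmj L R ihL ihR =>
    intro Δ hΔ
    obtain ⟨tjL, tiL, tsL⟩ := ihL _ (isSketch_restrictL him hmj L R hΔ)
    obtain ⟨tjR, tiR, tsR⟩ := ihR _ (isSketch_restrictR him hmj L R hΔ)
    have tj : ∀ v, j ∉ lam G c (node him hmj L R) v → XJ G c i j v := by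
      intro v hNj
      by_cases hjR : j ∈ lam G c R v
      · have hPL : lamPlus G c L v ≠ none := fun hn =>
          hNj ((mem_j_lam_node_iff him hmj L R v).mpr ⟨hn, hjR⟩)
        rcases push_ne_none_cases hPL with hsubL | ⟨u, hu, hbadL⟩
        · rcases hsubL with hiL | hmL
          · exact xj_of_xi_child (tiL v hiL) hmj
          · exact xj_weaken_right (tjL v hmL) hmj.le
        · exact xj_of_ssL (tsL u (not_mem_of_inter_empty hbadL (by simp))
            (not_mem_of_inter_empty hbadL (by simp)))
            (fun x => dist_adj hu.symm (c x)) hmj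
      · exact xj_mono (tjR v hjR) him.le
    have ti : ∀ v, i ∉ lam G c (node him hmj L R) v → XI G c i j v := by
      intro v hNi
      by_cases hiL : i ∈ lam G c L v
      · have hPR : lamPlus G c R v ≠ none := fun hn =>
          hNi ((mem_i_lam_node_iff him hmj L R v).mpr ⟨hn, hiL⟩)
        rcases push_ne_none_cases hPR with hsubR | ⟨u, hu, hbadR⟩
        · rcases hsubR with hmR | hjR
          · exact xi_mono_left (tiR v hmR) him.le
          · exact xi_of_xj_child (tjR v hjR) him
        · exact xi_of_ssR (tsR u (not_mem_of_inter_empty hbadR (by simp))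
            (not_mem_of_inter_empty hbadR (by simp)))
            (fun x => dist_adj hu.symm (c x)) him
      · exact xi_mono (tiL v hiL) hmj.le
    refine ⟨tj, ti, ?_⟩
    intro v hNi hNj
    by_cases hiL : i ∈ lam G c L v
    swap
    · exact ss_of_xiL (tiL v hiL) hmj
    have hPR : lamPlus G c R v ≠ none := fun hn =>
      hNi ((mem_i_lam_node_iff him hmj L R v).mpr ⟨hn, hiL⟩)
    by_cases hjR : j ∈ lam G c R v
    swap
    · exact ss_of_xjR (tjR v hjR) him
    have hPL : lamPlus G c L v ≠ none := fun hn =>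
      hNj ((mem_j_lam_node_iff him hmj L R v).mpr ⟨hn, hjR⟩)
    rcases push_ne_none_cases hPR with hsubR | ⟨u', hu', hbadR⟩
    · have hmR : m ∉ lam G c R v := by
        rcases hsubR with h | h
        · exact h
        · exact absurd hjR h
      rcases push_ne_none_cases hPL with hsubL | ⟨u, hu, hbadL⟩
      · -- 3a : Nm(R) ∧ Nm(L)
        have hmL : m ∉ lam G c L v := by
          rcases hsubL with h | h
          · exact absurd hiL h
          · exact h
        rcases tiR v hmR with ⟨l, hl1, hl2, g1, g2⟩
          | ⟨k', l', hk1', hk2', hl1', hl2', g1, g2, g3, g4⟩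
        · rcases tjL v hmL with ⟨k, hk1, hk2, f1, f2⟩
            | ⟨k', l', hk1', hk2', hl1', hl2', f1, f2, f3, f4⟩
          · exact Or.inr ⟨k, l, by omega, by omega, by omega, by omega, by omega,
              by omega, by omega, by omega⟩
          · exact Or.inl ⟨l', by omega, by omega, by omega, by omega⟩
        · exact Or.inl ⟨k', by omega, by omega, by omega, by omega⟩
      · -- 3b : Nm(R) ∧ E(L)
        have hiu : i ∉ lam G c L u := not_mem_of_inter_empty hbadL (by simp)
        have hmu : m ∉ lam G c L u := not_mem_of_inter_empty hbadL (by simp)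
        rcases Nat.lt_or_ge (m + 1) j with hj2 | hj2
        · have hd : ∀ x, G.dist v (c x) ≤ G.dist u (c x) + 1 :=
            fun x => dist_adj hu.symm (c x)
          rcases tsL u hiu hmu with ⟨k, hk1, hk2, f1, f2⟩
            | ⟨k, l, hk1, hk2, hl1, hl2, f1, f2, f3, f4⟩
          · have hdk := hd k
            rcases tiR v hmR with ⟨l, hl1, hl2, g1, g2⟩
              | ⟨k', l', hk1', hk2', hl1', hl2', g1, g2, g3, g4⟩
            · exact Or.inr ⟨k, l, by omega, by omega, by omega, by omega, by omega,
                by omega, by omega, by omega⟩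
            · exact Or.inl ⟨k', by omega, by omega, by omega, by omega⟩
          · have hdl := hd l
            exact Or.inl ⟨l, by omega, by omega, by omega, by omega⟩
        · -- j = m + 1 : impossible by the sketch
          have hjm : j = m + 1 := by omega
          subst hjm
          have hv := (lam_succ_a_not_mem R hmR).2
          exact (nobadL him hmj L R hΔ hbadL (y := m + 1) (by omega) le_rfl
            (by rw [hv] at hu; exact hu)).elim
    · -- E(R)
      have hmu' : m ∉ lam G c R u' := not_mem_of_inter_empty hbadR (by simp)
      have hju' : j ∉ lam G c R u' := not_mem_of_inter_empty hbadR (by simp)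
      have hd' : ∀ x, G.dist v (c x) ≤ G.dist u' (c x) + 1 :=
        fun x => dist_adj hu'.symm (c x)
      have hj2 : m + 2 ≤ j := bad_nontriv R u' hbadR
      rcases push_ne_none_cases hPL with hsubL | ⟨u, hu, hbadL⟩
      · -- 3c : Nm(L) ∧ E(R)
        have hmL : m ∉ lam G c L v := by
          rcases hsubL with h | h
          · exact absurd hiL h
          · exact h
        rcases Nat.lt_or_ge (i + 1) m with hm2 | hm2
        · rcases tsR u' hmu' hju' with ⟨k, hk1, hk2, g1, g2⟩
            | ⟨k, l, hk1, hk2, hl1, hl2, g1, g2, g3, g4⟩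
          · have hdk := hd' k
            rcases tjL v hmL with ⟨k0, hk01, hk02, f1, f2⟩
              | ⟨k0, l0, hk01, hk02, hl01, hl02, f1, f2, f3, f4⟩
            · exact Or.inr ⟨k0, k, by omega, by omega, by omega, by omega, by omega,
                by omega, by omega, by omega⟩
            · exact Or.inl ⟨l0, by omega, by omega, by omega, by omega⟩
          · have hdk := hd' k
            exact Or.inl ⟨k, by omega, by omega, by omega, by omega⟩
        · -- m = i + 1 : impossible by the sketch
          have hmi : m = i + 1 := by omega
          subst hmi
          have hv := lam_succ_b_not_mem L hmL
          exact (nobadR him hmj L R hΔ hbadR (y := i) le_rfl him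
            (by rw [hv] at hu'; exact hu')).elim
      · -- 3d : E(L) ∧ E(R)
        have hiu : i ∉ lam G c L u := not_mem_of_inter_empty hbadL (by simp)
        have hmu : m ∉ lam G c L u := not_mem_of_inter_empty hbadL (by simp)
        have hm2 : i + 2 ≤ m := bad_nontriv L u hbadL
        have hd : ∀ x, G.dist v (c x) ≤ G.dist u (c x) + 1 :=
          fun x => dist_adj hu.symm (c x)
        rcases tsL u hiu hmu with ⟨k, hk1, hk2, f1, f2⟩
          | ⟨k, l, hk1, hk2, hl1, hl2, f1, f2, f3, f4⟩
        · have hdk := hd k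
          rcases tsR u' hmu' hju' with ⟨k', hk1', hk2', g1, g2⟩
            | ⟨k', l', hk1', hk2', hl1', hl2', g1, g2, g3, g4⟩
          · have hdk' := hd' k'
            exact Or.inr ⟨k, k', by omega, by omega, by omega, by omega, by omega,
              by omega, by omega, by omega⟩
          · have hdk' := hd' k'
            exact Or.inl ⟨k', by omega, by omega, by omega, by omega⟩
        · have hdl := hd l
          exact Or.inl ⟨l, by omega, by omega, by omega, by omega⟩

end Stmt6Aux
open Pocket in
/-- If a sketchable pocket `Q = Q_{(p_i,p_j)}` (`i < j < i + t`) has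
`Λ⁺_Q(v) ≠ T_Q^+` for some vertex `v`, then `v` is pulled by `Q`. -/
theorem stmt6 {V : Type*} (G : SimpleGraph V) (t : ℕ) (c : ℕ → V)
    (hadj : ∀ ℓ, G.Adj (c ℓ) (c (ℓ + 1)))
    (i j : ℕ) (hij : i < j) (hjt : j < i + t)
    (Q : Pocket i j) (hQ : HasSketch G c Q)
    (v : V) (h : lamPlus G c Q v ≠ none) :
    PulledBy G c i j v := by
  obtain ⟨Γ, hΓ⟩ := hQ
  obtain ⟨tj, ti, ts⟩ := Stmt6Aux.main Q Γ hΓ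
  have h' : push G i j (lam G c Q) v ≠ none := h
  rcases Stmt6Aux.push_ne_none_cases h' with hsub | ⟨u, hu, hbad⟩
  · rcases hsub with hi | hj'
    · rcases ti v hi with ⟨l, h1, h2, h3, h4⟩ | ⟨k, l, h1, h2, h3, h4, h5, h6, h7, h8⟩
      · exact Or.inl ⟨l, h1, h2, le_min (by omega) (by omega)⟩
      · exact Or.inr ⟨k, l, h1, h2, h3, h4, le_min (by omega) (by omega),
          le_min (by omega) (by omega)⟩
    · rcases tj v hj' with ⟨k, h1, h2, h3, h4⟩ | ⟨k, l, h1, h2, h3, h4, h5, h6, h7, h8⟩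
      · exact Or.inl ⟨k, h1, h2, le_min (by omega) (by omega)⟩
      · exact Or.inr ⟨k, l, h1, h2, h3, h4, le_min (by omega) (by omega),
          le_min (by omega) (by omega)⟩
  · have hiu : i ∉ lam G c Q u :=
      Stmt6Aux.not_mem_of_inter_empty hbad (by simp)
    have hju : j ∉ lam G c Q u :=
      Stmt6Aux.not_mem_of_inter_empty hbad (by simp)
    have hd : ∀ x, G.dist v (c x) ≤ G.dist u (c x) + 1 :=
      fun x => Stmt6Aux.dist_adj hu.symm (c x)
    rcases ts u hiu hju with ⟨k, h1, h2, h3, h4⟩ | ⟨k, l, h1, h2, h3, h4, h5, h6, h7, h8⟩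
    · have := hd k
      exact Or.inl ⟨k, h1, h2, le_min (by omega) (by omega)⟩
    · have := hd k
      have := hd l
      exact Or.inr ⟨k, l, h1, h2, h3, h4, le_min (by omega) (by omega),
        le_min (by omega) (by omega)⟩
end

section
/- Let G be a graph with cycle C = [c_1,...,c_t] and let i ≤ k < m < l' ≤ j with j − i ≤ t − 2. If d_G(v,c_k) ≤ min(m−k−1, k−i) and d_G(v,c_{l'}) ≤ min(l'−m−1, j−l'+1), then d_G(c_k,c_{l'}) ≤ min(l'−k−2, k+t−1−l') < min(l'−k, k+t−l') = d_C(c_k,c_{l'}), so the Pair Condition d_C(c_a,c_b) ≤ d_G(c_a,c_b) fails for the pair (c_k, c_{l'}). -/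
/-- Case (1)(b) of the arc-pocket-sketch lemma: if
`d_G(v,c_k) ≤ min(m−k−1, k−i)` and `d_G(v,c_{l'}) ≤ min(l'−m−1, j−l'+1)` for indices
`i ≤ k < m < l' ≤ j` with `j − i ≤ t − 2`, then
`d_G(c_k,c_{l'}) ≤ min(l'−k−2, k+t−1−l') < min(l'−k, k+t−l') = d_C(c_k,c_{l'})`,
so the Pair Condition fails for the pair `(c_k, c_{l'})`. -/
theorem stmt15 {V : Type*} (G : SimpleGraph V) (hG : G.Connected)
    (t : ℕ) (c : ℕ → V)
    (hadj : ∀ ℓ, G.Adj (c ℓ) (c (ℓ + 1)))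
    (v : V) (i k m l' j : ℕ)
    (hik : i ≤ k) (hkm : k < m) (hml : m < l') (hlj : l' ≤ j)
    (hjt : j + 2 ≤ i + t)
    (h1 : G.dist v (c k) ≤ min (m - k - 1) (k - i))
    (h2 : G.dist v (c l') ≤ min (l' - m - 1) (j - l' + 1)) :
    G.dist (c k) (c l') ≤ min (l' - k - 2) (k + t - 1 - l') ∧
    min (l' - k - 2) (k + t - 1 - l') < min (l' - k) (k + t - l') ∧
    G.dist (c k) (c l') < min (l' - k) (k + t - l') := by
  have htri : G.dist (c k) (c l') ≤ G.dist (c k) v + G.dist v (c l') :=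
    hG.dist_triangle
  have hc : G.dist (c k) v = G.dist v (c k) := SimpleGraph.dist_comm
  omega
end
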